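/- arXiv:1602.06680 — 6 statements merged into one kernel-verified Lean document; each statement's English description precedes it below -/
import Mathlib

section
/- Let G be a countable group acting in a measure-preserving way on a standard probability space (X, μ), and let T ⊆ G be a finite subset. Then there exists a finite Borel partition β of X such that for every x ∈ X, each class of β contains at most one element of the orbit piece T · x. -/
open MeasureTheory Set
open scoped ENNReal NNReal

/-- A countable (or arbitrary indexed) measurable partition of `X`. -/
def IsCtblPart {X : Type*} [MeasurableSpace X] {ι : Type*} (A : ι → Set X) : Prop :=
  (∀ n, MeasurableSet (A n)) ∧ Pairwise (Function.onFun Disjoint A) ∧ (⋃ n, A n) = Set.univ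

/-- Conditional Shannon entropy of a partition relative to a sub-σ-algebra,
valued in `ℝ≥0∞`, defined via conditional expectations of indicators. -/
noncomputable def condEnt {X : Type*} [MeasurableSpace X] {ι : Type*}
    (μ : Measure X) (F : MeasurableSpace X) (A : ι → Set X) : ℝ≥0∞ :=
  ∫⁻ x, ∑' n : ι, ENNReal.ofReal
    (Real.negMulLog ((μ[Set.indicator (A n) (fun _ => (1 : ℝ)) | F]) x)) ∂μ

/-- Shannon entropy of a partition. -/
noncomputable def entPart {X : Type*} [MeasurableSpace X] {ι : Type*}
    (μ : Measure X) (A : ι → Set X) : ℝ≥0∞ :=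
  ∑' n : ι, ENNReal.ofReal (Real.negMulLog (μ (A n)).toReal)

/-- The σ-algebra generated by a partition. -/
def partSigma {X : Type*} [MeasurableSpace X] {ι : Type*} (A : ι → Set X) :
    MeasurableSpace X :=
  .generateFrom {s | ∃ n, s = A n}

/-- The smallest `G`-invariant σ-algebra containing a family of sets. -/
def sigmaGen (G : Type*) {X : Type*} [Group G] [MulAction G X] [MeasurableSpace X]
    {ι : Type*} (A : ι → Set X) : MeasurableSpace X :=
  .generateFrom {s | ∃ (g : G) (n : ι), s = (g • ·) ⁻¹' (A n)}

/-- The σ-algebra of `G`-invariant Borel sets. -/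
def invSigma (G X : Type*) [Group G] [MulAction G X] [MeasurableSpace X] :
    MeasurableSpace X :=
  .generateFrom {s | MeasurableSet s ∧ ∀ g : G, (g • ·) ⁻¹' s = s}

/-- The action of `G` on `(X, μ)` is probability-measure-preserving. -/
def IsPmp (G : Type*) {X : Type*} [Group G] [MulAction G X] [MeasurableSpace X]
    (μ : Measure X) : Prop :=
  ∀ g : G, MeasurePreserving (fun x : X => g • x) μ μ

/-- Almost every orbit is infinite. -/
def Aperiodic (G : Type*) {X : Type*} [Group G] [MulAction G X] [MeasurableSpace X]
    (μ : Measure X) : Prop :=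
  μ {x : X | (MulAction.orbit G x).Finite} = 0

/-- The action is (essentially) free. -/
def FreeAction (G : Type*) {X : Type*} [Group G] [MulAction G X] [MeasurableSpace X]
    (μ : Measure X) : Prop :=
  μ {x : X | ∃ g : G, g ≠ 1 ∧ g • x = x} = 0

/-- A sub-σ-algebra is `G`-invariant. -/
def InvariantSub (G : Type*) {X : Type*} [Group G] [MulAction G X]
    (F : MeasurableSpace X) : Prop :=
  ∀ (g : G) (s : Set X), MeasurableSet[F] s → MeasurableSet[F] ((g • ·) ⁻¹' s)

/-- `m₁` is contained in `m₂` modulo `μ`-null sets. -/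
def LeModNull {X : Type*} [MeasurableSpace X] (μ : Measure X)
    (m₁ m₂ : MeasurableSpace X) : Prop :=
  ∀ s : Set X, MeasurableSet[m₁] s → ∃ t : Set X, MeasurableSet[m₂] t ∧ μ (symmDiff s t) = 0

/-- The σ-algebra `m` generates the Borel σ-algebra modulo `μ`-null sets. -/
def GenModNull {X : Type*} [MeasurableSpace X] (μ : Measure X)
    (m : MeasurableSpace X) : Prop :=
  ∀ s : Set X, MeasurableSet s → ∃ t : Set X, MeasurableSet[m] t ∧ μ (symmDiff s t) = 0

/-- Relative Rokhlin entropy of `G ↷ (X, μ)` relative to `F`. -/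
noncomputable def rokhlinEnt (G : Type*) {X : Type*} [Group G] [MulAction G X]
    [mX : MeasurableSpace X] (μ : Measure X) (F : MeasurableSpace X) : ℝ≥0∞ :=
  ⨅ (A : ℕ → Set X) (_ : @IsCtblPart X mX ℕ A)
    (_ : @GenModNull X mX μ (@sigmaGen G X _ _ mX ℕ A ⊔ F ⊔ @invSigma G X _ _ mX)),
    @condEnt X mX ℕ μ (F ⊔ @invSigma G X _ _ mX) A

/-- Outer Rokhlin entropy of a collection `C` of Borel sets relative to `F`. -/
noncomputable def outerRokEnt (G : Type*) {X : Type*} [Group G] [MulAction G X]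
    [mX : MeasurableSpace X] (μ : Measure X) (C : Set (Set X)) (F : MeasurableSpace X) : ℝ≥0∞ :=
  ⨅ (A : ℕ → Set X) (_ : @IsCtblPart X mX ℕ A)
    (_ : ∀ s ∈ C, ∃ t : Set X,
        MeasurableSet[@sigmaGen G X _ _ mX ℕ A ⊔ F ⊔ @invSigma G X _ _ mX] t ∧
          μ (symmDiff s t) = 0),
    @condEnt X mX ℕ μ (F ⊔ @invSigma G X _ _ mX) A

/-- `G ↷ (Y, ν)` weakly contains `G ↷ (Z, η)`. -/
def WeaklyContains (G : Type*) [Group G] {Y Z : Type*} [MeasurableSpace Y]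
    [MeasurableSpace Z] [MulAction G Y] [MulAction G Z]
    (ν : Measure Y) (η : Measure Z) : Prop :=
  letI : DecidableEq G := Classical.decEq G
  ∀ (k : ℕ) (γ : Fin k → Set Z), IsCtblPart γ → ∀ (T : Finset G) (ε : ℝ), 0 < ε →
    ∃ ζ : Fin k → Set Y, IsCtblPart ζ ∧
      ∑ f : (↥T → Fin k),
        |(ν (⋂ t : ↥T, ((t : G) • ·) ⁻¹' ζ (f t))).toReal -
         (η (⋂ t : ↥T, ((t : G) • ·) ⁻¹' γ (f t))).toReal| < ε

/-- `l₁` weakly contains `l₂` as joinings with the fixed action `G ↷ (X, μ)`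
(`l₁` a joining on `X × Y₁`, `l₂` a joining on `X × Y₂`). -/
def WCJoin (G : Type*) [Group G] {X Y₁ Y₂ : Type*} [MeasurableSpace X]
    [MeasurableSpace Y₁] [MeasurableSpace Y₂] [MulAction G X] [MulAction G Y₁]
    [MulAction G Y₂] (l₁ : Measure (X × Y₁)) (l₂ : Measure (X × Y₂)) : Prop :=
  letI : DecidableEq G := Classical.decEq G
  ∀ (m k : ℕ) (P : Fin m → Set X), IsCtblPart P → ∀ (γ : Fin k → Set Y₂), IsCtblPart γ →
    ∀ (T : Finset G) (ε : ℝ), 0 < ε →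
    ∃ ζ : Fin k → Set Y₁, IsCtblPart ζ ∧
      ∑ j : Fin m, ∑ f : (↥T → Fin k),
        |(l₁ (Prod.fst ⁻¹' P j ∩ Prod.snd ⁻¹' ⋂ t : ↥T, ((t : G) • ·) ⁻¹' ζ (f t))).toReal -
         (l₂ (Prod.fst ⁻¹' P j ∩ Prod.snd ⁻¹' ⋂ t : ↥T, ((t : G) • ·) ⁻¹' γ (f t))).toReal| < ε

/-- Ergodicity of a group action with respect to a (not necessarily probability) measure. -/
def ErgAction (G : Type*) [Group G] {X : Type*} [MeasurableSpace X] [MulAction G X]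
    (ν : Measure X) : Prop :=
  ∀ s : Set X, MeasurableSet s → (∀ g : G, (g • ·) ⁻¹' s = s) → ν s = 0 ∨ ν sᶜ = 0

/-- `ν` has exactly `n` ergodic components under the action of `G`. -/
def HasNErgComponents (G : Type*) [Group G] {X : Type*} [MeasurableSpace X]
    [MulAction G X] (ν : Measure X) (n : ℕ) : Prop :=
  ∃ Y : Fin n → Set X, (∀ i, MeasurableSet (Y i)) ∧
    Pairwise (Function.onFun Disjoint Y) ∧ ν (⋃ i, Y i)ᶜ = 0 ∧
    ∀ i, (∀ g : G, (g • ·) ⁻¹' Y i = Y i) ∧ 0 < ν (Y i) ∧ ErgAction G (ν.restrict (Y i))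


section stmt2aux

section coloring
variable {G X : Type*} [MeasurableSpace X]

/-- least element of `range (d+1)` not in `F`. -/
noncomputable def pick (d : ℕ) (F : Finset ℕ) : ℕ :=
  if h : (Finset.range (d + 1) \ F).Nonempty then (Finset.range (d + 1) \ F).min' h else 0

lemma pick_mem {d : ℕ} {F : Finset ℕ} (h : F.card ≤ d) :
    pick d F ∈ Finset.range (d + 1) \ F := by
  have hne : (Finset.range (d + 1) \ F).Nonempty := by
    rw [Finset.sdiff_nonempty]
    intro hsub
    have := Finset.card_le_card hsub
    simp only [Finset.card_range] at this
    omega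
  rw [pick, dif_pos hne]
  exact Finset.min'_mem _ hne

noncomputable def paintF (σ : G → X → X) (c : X → ℕ) (S : Finset G) : ℕ → X → ℕ
  | n => fun x =>
    pick S.card ((S.filter (fun g => c (σ g x) < n)).attach.image
      (fun g => paintF σ c S (c (σ g.1 x)) (σ g.1 x)))
  termination_by n => n
  decreasing_by exact (Finset.mem_filter.mp g.2).2

noncomputable def fcol (σ : G → X → X) (c : X → ℕ) (S : Finset G) (x : X) : ℕ :=
  paintF σ c S (c x) x

/-- the forbidden set at level `n`. -/
noncomputable def forb (σ : G → X → X) (c : X → ℕ) (S : Finset G) (n : ℕ) (x : X) :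
    Finset ℕ :=
  (S.filter (fun g => c (σ g x) < n)).image (fun g => fcol σ c S (σ g x))

lemma paintF_eq (σ : G → X → X) (c : X → ℕ) (S : Finset G) (n : ℕ) (x : X) :
    paintF σ c S n x = pick S.card (forb σ c S n x) := by
  rw [paintF]
  congr 1
  rw [forb]
  classical
  rw [← Finset.attach_image_val (s := S.filter (fun g => c (σ g x) < n)), Finset.image_image]
  rfl

lemma forb_card (σ : G → X → X) (c : X → ℕ) (S : Finset G) (n : ℕ) (x : X) :
    (forb σ c S n x).card ≤ S.card :=
  le_trans Finset.card_image_le (le_trans (Finset.card_filter_le _ _) le_rfl)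

lemma paintF_le (σ : G → X → X) (c : X → ℕ) (S : Finset G) (n : ℕ) (x : X) :
    paintF σ c S n x ≤ S.card := by
  have := pick_mem (forb_card σ c S n x)
  rw [Finset.mem_sdiff, Finset.mem_range] at this
  rw [paintF_eq]; omega

lemma paintF_notMem (σ : G → X → X) (c : X → ℕ) (S : Finset G) (n : ℕ) (x : X) :
    paintF σ c S n x ∉ forb σ c S n x := by
  have := pick_mem (forb_card σ c S n x)
  rw [Finset.mem_sdiff] at this
  rw [paintF_eq]; exact this.2

lemma fcol_ne_of_lt {σ : G → X → X} {c : X → ℕ} {S : Finset G} {g : G} (hg : g ∈ S)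
    {x : X} (hlt : c (σ g x) < c x) : fcol σ c S (σ g x) ≠ fcol σ c S x := by
  intro h
  apply paintF_notMem σ c S (c x) x
  rw [← fcol, ← h]
  exact Finset.mem_image.mpr ⟨g, Finset.mem_filter.mpr ⟨hg, hlt⟩, rfl⟩

end coloring

section meas
variable {G X : Type*} [MeasurableSpace X]

lemma measurableSet_paintF {σ : G → X → X} {c : X → ℕ} {S : Finset G}
    (hσ : ∀ g : G, Measurable (σ g)) (hc : Measurable c) :
    ∀ n i, MeasurableSet {x | paintF σ c S n x = i} := by
  intro n
  induction n using Nat.strong_induction_on with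
  | _ n IH =>
    intro i
    classical
    set w : ↥S → X → Option ℕ := fun g x =>
      if c (σ g.1 x) < n then some (fcol σ c S (σ g.1 x)) else none with hw
    set Φ : (↥S → Option ℕ) → ℕ := fun v =>
      pick S.card ((Finset.univ.filter (fun g : ↥S => (v g).isSome)).image
        (fun g => (v g).getD 0)) with hΦ
    have key : ∀ x, paintF σ c S n x = Φ (fun g => w g x) := by
      intro x
      rw [paintF_eq, hΦ]
      congr 1
      ext j
      simp only [forb, Finset.mem_image, Finset.mem_filter, hw, Finset.mem_univ, true_and]
      constructor
      · rintro ⟨g, ⟨hgS, hlt⟩, rfl⟩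
        exact ⟨⟨g, hgS⟩, by simp [hlt], by simp [hlt]⟩
      · rintro ⟨g, hsome, hval⟩
        by_cases hlt : c (σ g.1 x) < n
        · refine ⟨g.1, ⟨g.2, hlt⟩, ?_⟩
          simp [hlt] at hval
          exact hval
        · simp [hlt] at hsome
    have hset : {x | paintF σ c S n x = i} =
        ⋃ (v : ↥S → Option ℕ) (_ : Φ v = i), ⋂ g : ↥S, {x | w g x = v g} := by
      ext x
      simp only [mem_setOf_eq, mem_iUnion, mem_iInter]
      constructor
      · intro h
        exact ⟨fun g => w g x, by rw [← key x]; exact h, fun g => rfl⟩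
      · rintro ⟨v, hv, hmem⟩
        rw [key x]
        have hveq : (fun g => w g x) = v := funext fun g => hmem g
        rw [hveq]; exact hv
    rw [hset]
    refine MeasurableSet.iUnion fun v => MeasurableSet.iUnion fun _ =>
      MeasurableSet.iInter fun g => ?_
    rcases hv : v g with _ | j
    · have heq : {x | w g x = none} = (fun x => c (σ g.1 x)) ⁻¹' {m | ¬ m < n} := by
        ext x
        simp only [hw, mem_setOf_eq, mem_preimage]
        by_cases hlt : c (σ g.1 x) < n <;> simp [hlt]
      rw [heq]
      exact (hc.comp (hσ g.1)) MeasurableSet.of_discrete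
    · have heq : {x | w g x = some j} =
          σ g.1 ⁻¹' (⋃ (m : ℕ) (_ : m < n), ({y | c y = m} ∩ {y | paintF σ c S m y = j})) := by
        ext x
        simp only [hw, mem_setOf_eq, mem_preimage, mem_iUnion, mem_inter_iff]
        by_cases hlt : c (σ g.1 x) < n
        · simp only [if_pos hlt, Option.some.injEq]
          constructor
          · intro h
            exact ⟨c (σ g.1 x), hlt, rfl, h⟩
          · rintro ⟨m, hm, hcm, hp⟩
            rw [fcol, hcm]; exact hp
        · simp only [if_neg hlt]
          constructor
          · intro h; exact absurd h (by simp)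
          · rintro ⟨m, hm, hcm, hp⟩
            exact absurd (hcm ▸ hm) hlt
      rw [heq]
      refine (hσ g.1) (MeasurableSet.iUnion fun m => MeasurableSet.iUnion fun hm =>
        ((hc (MeasurableSet.singleton m)).inter (IH m hm j)))

lemma measurableSet_fcol {σ : G → X → X} {c : X → ℕ} {S : Finset G}
    (hσ : ∀ g : G, Measurable (σ g)) (hc : Measurable c) (i : ℕ) :
    MeasurableSet {x | fcol σ c S x = i} := by
  have heq : {x | fcol σ c S x = i} =
      ⋃ n, ({x | c x = n} ∩ {x | paintF σ c S n x = i}) := by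
    ext x
    simp only [mem_iUnion, mem_inter_iff, mem_setOf_eq, fcol]
    exact ⟨fun h => ⟨c x, rfl, h⟩, fun ⟨n, hn, h⟩ => hn ▸ h⟩
  rw [heq]
  exact MeasurableSet.iUnion fun n =>
    (hc (MeasurableSet.singleton n)).inter (measurableSet_paintF hσ hc n i)

end meas

end stmt2aux

theorem stmt2 {G X : Type*} [Group G] [Countable G] [MulAction G X]
    [mX : MeasurableSpace X] [StandardBorelSpace X]
    (μ : Measure X) [IsProbabilityMeasure μ] (hpmp : IsPmp G μ)
    (T : Finset G) :
    ∃ (k : ℕ) (β : Fin k → Set X), IsCtblPart β ∧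
      ∀ (x : X) (i : Fin k), ∀ t₁ ∈ T, ∀ t₂ ∈ T,
        t₁ • x ∈ β i → t₂ • x ∈ β i → t₁ • x = t₂ • x := by
  classical
  set σ : G → X → X := fun g x => g • x with hσdef
  have hσ : ∀ g : G, Measurable (σ g) := fun g => (hpmp g).measurable
  set S : Finset G := (T ×ˢ T).image (fun p => p.1 * p.2⁻¹) with hS
  have hSmem : ∀ t₁ ∈ T, ∀ t₂ ∈ T, t₁ * t₂⁻¹ ∈ S := by
    intro t₁ h₁ t₂ h₂
    exact Finset.mem_image.mpr ⟨(t₁, t₂), Finset.mem_product.mpr ⟨h₁, h₂⟩, rfl⟩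
  have hsymm : ∀ g ∈ S, g⁻¹ ∈ S := by
    intro g hg
    obtain ⟨⟨t₁, t₂⟩, hmem, rfl⟩ := Finset.mem_image.mp hg
    obtain ⟨h₁, h₂⟩ := Finset.mem_product.mp hmem
    simpa using hSmem t₂ h₂ t₁ h₁
  obtain ⟨e, he⟩ := exists_measurableEmbedding_real X
  set E : ℕ ≃ ℚ × ℚ := (Denumerable.eqv (ℚ × ℚ)).symm with hE
  set u : ℕ → Set X := fun n =>
    e ⁻¹' (Set.Ioo (((E n).1 : ℝ)) (((E n).2 : ℝ))) with hu
  have humeas : ∀ n, MeasurableSet (u n) := fun n => he.measurable measurableSet_Ioo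
  have hukey : ∀ (q r : ℚ) (x : X), x ∈ u (E.symm (q, r)) ↔ e x ∈ Set.Ioo ((q : ℝ)) ((r : ℝ)) := by
    intro q r x
    rw [hu]
    simp only [mem_preimage, Equiv.apply_symm_apply]
  set P : X → ℕ → Prop := fun x n => x ∈ u n ∧ ∀ g ∈ S, σ g x ∈ u n → σ g x = x with hP
  have hex : ∀ x, ∃ n, P x n := by
    intro x
    set D : Finset ℝ := (S.image (fun g => e (σ g x))).filter (fun y => y ≠ e x) with hD
    have hDpos : ∀ y ∈ D, 0 < |y - e x| := by
      intro y hy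
      have : y ≠ e x := (Finset.mem_filter.mp hy).2
      simpa [sub_eq_zero] using this
    obtain ⟨ε, hε, hεle⟩ : ∃ ε : ℝ, 0 < ε ∧ ∀ y ∈ D, ε ≤ |y - e x| := by
      by_cases hne : D.Nonempty
      · refine ⟨(D.image (fun y => |y - e x|)).min' (hne.image _), ?_, ?_⟩
        · obtain ⟨y, hy, hyeq⟩ := Finset.mem_image.mp
            (Finset.min'_mem (D.image (fun y => |y - e x|)) (hne.image _))
          rw [← hyeq]; exact hDpos y hy
        · intro y hy
          exact Finset.min'_le _ _ (Finset.mem_image.mpr ⟨y, hy, rfl⟩)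
      · exact ⟨1, one_pos, fun y hy => absurd ⟨y, hy⟩ hne⟩
    obtain ⟨q, hq1, hq2⟩ := exists_rat_btwn (sub_lt_self (e x) hε)
    obtain ⟨r, hr1, hr2⟩ := exists_rat_btwn (lt_add_of_pos_right (e x) hε)
    refine ⟨E.symm (q, r), (hukey q r x).mpr ⟨hq2, hr1⟩, ?_⟩
    intro g hg hmem
    by_contra hne
    have hneq : e (σ g x) ≠ e x := fun h => hne (he.injective h)
    have hyD : e (σ g x) ∈ D :=
      Finset.mem_filter.mpr ⟨Finset.mem_image.mpr ⟨g, hg, rfl⟩, hneq⟩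
    have hIoo : e (σ g x) ∈ Set.Ioo ((q : ℝ)) ((r : ℝ)) := (hukey q r (σ g x)).mp hmem
    have hdist := hεle _ hyD
    rcases le_or_gt (e (σ g x)) (e x) with hle | hlt
    · have : e (σ g x) ≤ e x - ε := by
        rw [abs_sub_comm, abs_of_nonneg (by linarith)] at hdist
        linarith
      have := hIoo.1
      linarith
    · have : e x + ε ≤ e (σ g x) := by
        rw [abs_of_pos (by linarith)] at hdist
        linarith
      have := hIoo.2
      linarith
  set c : X → ℕ := fun x => Nat.find (hex x) with hcdef
  have hPmeas : ∀ n, MeasurableSet {x | P x n} := by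
    intro n
    have : {x | P x n} = u n ∩ ⋂ g : ↥S, ((σ g.1 ⁻¹' (u n))ᶜ ∪ {x | e (σ g.1 x) = e x}) := by
      ext x
      simp only [hP, mem_setOf_eq, mem_inter_iff, mem_iInter, mem_union, mem_compl_iff,
        mem_preimage, Subtype.forall]
      constructor
      · rintro ⟨hx, hall⟩
        refine ⟨hx, fun g hg => ?_⟩
        by_cases hmem : σ g x ∈ u n
        · exact Or.inr (congrArg e (hall g hg hmem))
        · exact Or.inl hmem
      · rintro ⟨hx, hall⟩
        refine ⟨hx, fun g hg hmem => ?_⟩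
        rcases hall g hg with h | h
        · exact absurd hmem h
        · exact he.injective h
    rw [this]
    refine (humeas n).inter (MeasurableSet.iInter fun g => MeasurableSet.union
      (((hσ g.1) (humeas n)).compl) ?_)
    exact measurableSet_eq_fun (he.measurable.comp (hσ g.1)) he.measurable
  have hc : Measurable c := measurable_find hex hPmeas
  have hcspec : ∀ x, P x (c x) := fun x => Nat.find_spec (hex x)
  have hcproper : ∀ g ∈ S, ∀ x : X, σ g x ≠ x → c (σ g x) ≠ c x := by
    intro g hg x hne hEq
    have h1 := (hcspec x).2 g hg
    have h2 := (hcspec (σ g x)).1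
    rw [hEq] at h2
    exact hne (h1 h2)
  have hfle : ∀ x : X, fcol σ c S x ≤ S.card := fun x => paintF_le σ c S (c x) x
  have hfmeas : ∀ i : ℕ, MeasurableSet {x | fcol σ c S x = i} :=
    fun i => measurableSet_fcol hσ hc i
  have hproper : ∀ g ∈ S, ∀ x : X, σ g x ≠ x → fcol σ c S (σ g x) ≠ fcol σ c S x := by
    intro g hg x hne
    rcases lt_or_gt_of_ne (hcproper g hg x hne) with h | h
    · exact fcol_ne_of_lt hg h
    · have hg' := hsymm g hg
      have hx : σ g⁻¹ (σ g x) = x := by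
        show g⁻¹ • (g • x) = x
        exact inv_smul_smul g x
      have h' : c (σ g⁻¹ (σ g x)) < c (σ g x) := by rw [hx]; exact h
      have hne' := fcol_ne_of_lt hg' h'
      rw [hx] at hne'
      exact hne'.symm
  refine ⟨S.card + 1, fun i => {x | fcol σ c S x = i.val}, ⟨?_, ?_, ?_⟩, ?_⟩
  · exact fun i => hfmeas i.val
  · intro i j hij
    simp only [Function.onFun]
    rw [Set.disjoint_left]
    intro x hxi hxj
    exact hij (Fin.ext ((Eq.symm hxi).trans hxj))
  · rw [Set.eq_univ_iff_forall]
    intro x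
    rw [mem_iUnion]
    exact ⟨⟨fcol σ c S x, Nat.lt_succ_of_le (hfle x)⟩, rfl⟩
  · intro x i t₁ ht₁ t₂ ht₂ h1 h2
    by_contra hne
    have hg := hSmem t₁ ht₁ t₂ ht₂
    have hy : σ (t₁ * t₂⁻¹) (t₂ • x) = t₁ • x := by
      show (t₁ * t₂⁻¹) • (t₂ • x) = t₁ • x
      rw [smul_smul, inv_mul_cancel_right]
    have hney : σ (t₁ * t₂⁻¹) (t₂ • x) ≠ t₂ • x := by rw [hy]; exact hne
    have hcon := hproper _ hg (t₂ • x) hney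
    rw [hy] at hcon
    exact hcon ((h1 : fcol σ c S (t₁ • x) = i.val).trans (h2 : fcol σ c S (t₂ • x) = i.val).symm)
end

section
/- Let (X, μ) be a standard probability space, let Σ ⊆ B(X) be a sub-σ-algebra with associated factor map f : (X, μ) → (Y, ν) and disintegration μ = ∫_Y μ_y dν(y). If F ⊆ B(X) is a countably generated σ-algebra, then for every countable measurable partition α one has H(α | F ∨ Σ) = ∫_Y H_{μ_y}(α | F) dν(y). -/
open MeasureTheory Set
open scoped ENNReal NNReal

section Helpers
variable {X Y : Type*}

lemma countable_generatePiSystem' {S : Set (Set X)} (hS : S.Countable) :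
    (generatePiSystem S).Countable := by
  have hsub : generatePiSystem S ⊆ Set.sInter '' {t : Set (Set X) | t.Finite ∧ t ⊆ S} := by
    intro s hs
    induction hs with
    | base h => exact ⟨{_}, ⟨Set.finite_singleton _, Set.singleton_subset_iff.2 h⟩, by simp⟩
    | inter h_s h_t h_nonempty ih_s ih_t =>
        obtain ⟨t1, ⟨ht1f, ht1s⟩, rfl⟩ := ih_s
        obtain ⟨t2, ⟨ht2f, ht2s⟩, rfl⟩ := ih_t
        exact ⟨t1 ∪ t2, ⟨ht1f.union ht2f, Set.union_subset ht1s ht2s⟩,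
          by rw [Set.sInter_union]⟩
  exact ((Set.countable_setOf_finite_subset hS).image _).mono hsub

lemma trace_sup_comap (F : MeasurableSpace X) (mY : MeasurableSpace Y) (f : X → Y) (y : Y)
    {S : Set X} (hS : MeasurableSet[F ⊔ MeasurableSpace.comap f mY] S) :
    ∃ B, MeasurableSet[F] B ∧ S ∩ f ⁻¹' {y} = B ∩ f ⁻¹' {y} := by
  let m' : MeasurableSpace X :=
    { MeasurableSet' := fun S => ∃ B, MeasurableSet[F] B ∧ S ∩ f ⁻¹' {y} = B ∩ f ⁻¹' {y}
      measurableSet_empty := ⟨∅, MeasurableSet.empty, rfl⟩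
      measurableSet_compl := by
        rintro s ⟨B, hB, hsB⟩
        refine ⟨Bᶜ, hB.compl, ?_⟩
        have h' : ∀ x ∈ f ⁻¹' {y}, x ∈ s ↔ x ∈ B := by
          intro x hx
          constructor
          · intro hxs
            exact ((Set.ext_iff.1 hsB x).1 ⟨hxs, hx⟩).1
          · intro hxB
            exact ((Set.ext_iff.1 hsB x).2 ⟨hxB, hx⟩).1
        ext x
        simp only [Set.mem_inter_iff, Set.mem_compl_iff]
        constructor
        · rintro ⟨hxs, hx⟩; exact ⟨fun hxB => hxs ((h' x hx).2 hxB), hx⟩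
        · rintro ⟨hxB, hx⟩; exact ⟨fun hxs => hxB ((h' x hx).1 hxs), hx⟩
      measurableSet_iUnion := by
        intro g hg
        choose B hB hgB using hg
        exact ⟨⋃ n, B n, MeasurableSet.iUnion hB, by
          rw [Set.iUnion_inter, Set.iUnion_inter]; exact Set.iUnion_congr hgB⟩ }
  have hle : F ⊔ MeasurableSpace.comap f mY ≤ m' := by
    refine sup_le (fun s hs => ⟨s, hs, rfl⟩) ?_
    rintro s ⟨C, hC, rfl⟩
    by_cases hy : y ∈ C
    · refine ⟨Set.univ, @MeasurableSet.univ X F, ?_⟩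
      simp only [Set.univ_inter]
      ext x
      simp only [Set.mem_inter_iff, Set.mem_preimage, Set.mem_singleton_iff]
      exact ⟨fun h => h.2, fun h => ⟨by rw [h]; exact hy, h⟩⟩
    · refine ⟨∅, @MeasurableSet.empty X F, ?_⟩
      simp only [Set.empty_inter]
      ext x
      simp only [Set.mem_inter_iff, Set.mem_preimage, Set.mem_singleton_iff,
        Set.mem_empty_iff_false, iff_false, not_and]
      intro hxC hxy
      exact hy (hxy ▸ hxC)
  exact hle S hS

lemma iSup_rat_eq (a : ℝ≥0∞) :
    (⨆ q : ℚ, if ENNReal.ofReal q < a then ENNReal.ofReal q else 0) = a := by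
  apply le_antisymm
  · refine iSup_le fun q => ?_
    split_ifs with h
    · exact h.le
    · exact zero_le
  · by_contra hlt
    push_neg at hlt
    set b := ⨆ q : ℚ, if ENNReal.ofReal q < a then ENNReal.ofReal q else 0 with hb
    obtain ⟨q, hq0, hbq, hqa⟩ := ENNReal.lt_iff_exists_rat_btwn.1 hlt
    have hcoe : (Real.toNNReal q : ℝ≥0∞) = ENNReal.ofReal q := rfl
    rw [hcoe] at hbq hqa
    have : ENNReal.ofReal q ≤ b := by
      have := le_iSup (fun q : ℚ => if ENNReal.ofReal q < a then ENNReal.ofReal q else 0) q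
      rwa [if_pos hqa] at this
    exact absurd (this.trans_lt hbq) (lt_irrefl _)

lemma exists_F_version (F : MeasurableSpace X) (mY : MeasurableSpace Y) (f : X → Y) (y : Y)
    {H : X → ℝ≥0∞} (hH : Measurable[F ⊔ MeasurableSpace.comap f mY] H) :
    ∃ H' : X → ℝ≥0∞, Measurable[F] H' ∧ ∀ x ∈ f ⁻¹' {y}, H x = H' x := by
  have hSq : ∀ q : ℚ, MeasurableSet[F ⊔ MeasurableSpace.comap f mY]
      (H ⁻¹' Set.Ioi (ENNReal.ofReal q)) := fun q => hH measurableSet_Ioi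
  choose B hB hSB using fun q : ℚ => trace_sup_comap F mY f y (hSq q)
  refine ⟨fun x => ⨆ q : ℚ, (B q).indicator (fun _ => ENNReal.ofReal q) x, ?_, ?_⟩
  · exact Measurable.iSup fun q => measurable_const.indicator (hB q)
  · intro x hx
    have hmem : ∀ q : ℚ, x ∈ B q ↔ ENNReal.ofReal q < H x := by
      intro q
      constructor
      · intro hxB
        have := (Set.ext_iff.1 (hSB q) x).2 ⟨hxB, hx⟩
        exact this.1
      · intro hq
        exact ((Set.ext_iff.1 (hSB q) x).1 ⟨hq, hx⟩).1
    calc H x = ⨆ q : ℚ, if ENNReal.ofReal q < H x then ENNReal.ofReal q else 0 :=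
          (iSup_rat_eq (H x)).symm
      _ = ⨆ q : ℚ, (B q).indicator (fun _ => ENNReal.ofReal q) x := by
          refine iSup_congr fun q => ?_
          by_cases h : x ∈ B q
          · rw [Set.indicator_of_mem h, if_pos ((hmem q).1 h)]
          · rw [Set.indicator_of_notMem h, if_neg (fun hlt => h ((hmem q).2 hlt))]

end Helpers

theorem stmt3 {X Y : Type*} (F : MeasurableSpace X)
    [mX : MeasurableSpace X] [StandardBorelSpace X]
    [mY : MeasurableSpace Y] [StandardBorelSpace Y]
    (μ : Measure X) [IsProbabilityMeasure μ]
    (f : X → Y) (hf : Measurable f)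
    (ν : Measure Y) (hν : ν = Measure.map f μ)
    (μy : Y → Measure X)
    (hker : ∀ s : Set X, MeasurableSet s → Measurable fun y => μy y s)
    (hprob : ∀ y : Y, IsProbabilityMeasure (μy y))
    (hdis : ∀ s : Set X, MeasurableSet s → μ s = ∫⁻ y, μy y s ∂ν)
    (hfib : ∀ᵐ y ∂ν, μy y (f ⁻¹' {y}) = 1)
    (hFle : F ≤ mX) (hFcg : @MeasurableSpace.CountablyGenerated X F)
    (α : ℕ → Set X) (hα : IsCtblPart α) :
    condEnt μ (F ⊔ MeasurableSpace.comap f mY) α = ∫⁻ y, condEnt (μy y) F α ∂ν := by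
  classical
  obtain ⟨hαmeas, hαdisj, -⟩ := hα
  haveI : IsProbabilityMeasure ν := by rw [hν]; exact Measure.isProbabilityMeasure_map hf.aemeasurable
  have hSig : MeasurableSpace.comap f mY ≤ mX := hf.comap_le
  have hG : F ⊔ MeasurableSpace.comap f mY ≤ mX := sup_le hFle hSig
  set h : ℕ → X → ℝ :=
    fun n => μ[Set.indicator (α n) (fun _ => (1 : ℝ))|F ⊔ MeasurableSpace.comap f mY] with hh
  -- basic facts about the kernel
  have hmeasμy : Measurable μy := Measure.measurable_of_measurable_coe _ hker
  have hbind : μ = ν.bind μy := by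
    refine Measure.ext fun s hs => ?_
    rw [hdis s hs, Measure.bind_apply hs hmeasμy.aemeasurable]
  have hL0 : ∀ g : X → ℝ≥0∞, Measurable g →
      ∫⁻ x, g x ∂μ = ∫⁻ y, ∫⁻ x, g x ∂(μy y) ∂ν := by
    intro g hg
    rw [hbind, Measure.lintegral_bind hmeasμy.aemeasurable hg.aemeasurable]
  have hae_trans : ∀ {p : X → Prop}, (∀ᵐ x ∂μ, p x) → ∀ᵐ y ∂ν, ∀ᵐ x ∂(μy y), p x := by
    intro p hp
    set N := toMeasurable μ {x | ¬ p x} with hN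
    have hNm : MeasurableSet N := measurableSet_toMeasurable _ _
    have hN0 : μ N = 0 := by
      rw [measure_toMeasurable]
      exact hp
    have hint0 : ∫⁻ y, μy y N ∂ν = 0 := by rw [← hdis N hNm, hN0]
    have := (lintegral_eq_zero_iff (hker N hNm)).1 hint0
    filter_upwards [this] with y hy
    have : μy y {x | ¬ p x} = 0 :=
      measure_mono_null (subset_toMeasurable _ _) hy
    exact this
  -- disintegration of set integrals over fibered sets
  have hL3 : ∀ g : X → ℝ≥0∞, Measurable g → ∀ B : Set X, MeasurableSet B →
      ∀ C : Set Y, MeasurableSet C →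
      ∫⁻ x in B ∩ f ⁻¹' C, g x ∂μ = ∫⁻ y in C, ∫⁻ x in B, g x ∂(μy y) ∂ν := by
    intro g hg B hB C hC
    have hpre : MeasurableSet (f ⁻¹' C) := hf hC
    have h1 : ∫⁻ x in B ∩ f ⁻¹' C, g x ∂μ
        = ∫⁻ x, (B ∩ f ⁻¹' C).indicator g x ∂μ := (lintegral_indicator (hB.inter hpre) g).symm
    rw [h1, hL0 _ (hg.indicator (hB.inter hpre))]
    have h2 : ∀ᵐ y ∂ν, ∫⁻ x, (B ∩ f ⁻¹' C).indicator g x ∂(μy y)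
        = C.indicator (fun y => ∫⁻ x in B, g x ∂(μy y)) y := by
      filter_upwards [hfib] with y hy
      haveI := hprob y
      by_cases hyC : y ∈ C
      · rw [Set.indicator_of_mem hyC]
        have hCfull : μy y (f ⁻¹' C) = 1 := by
          refine le_antisymm prob_le_one ?_
          rw [← hy]
          exact measure_mono (Set.preimage_mono (Set.singleton_subset_iff.2 hyC))
        have hCc : μy y ((f ⁻¹' C)ᶜ) = 0 := by
          rw [measure_compl hpre (measure_ne_top _ _), hCfull, measure_univ, tsub_self]
        have hBeq : (B ∩ f ⁻¹' C : Set X) =ᵐ[μy y] B := by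
          rw [MeasureTheory.ae_eq_set]
          constructor
          · have hempty : (B ∩ f ⁻¹' C) \ B = ∅ := by
              ext x; simp only [Set.mem_diff, Set.mem_inter_iff, Set.mem_empty_iff_false,
                iff_false, not_and]; tauto
            rw [hempty]; exact measure_empty
          · exact measure_mono_null (fun x hx hC' => hx.2 ⟨hx.1, hC'⟩) hCc
        rw [lintegral_indicator (hB.inter hpre) g, setLIntegral_congr hBeq]
      · rw [Set.indicator_of_notMem hyC]
        have hC0 : μy y (f ⁻¹' C) = 0 := by
          have hsub : f ⁻¹' C ⊆ (f ⁻¹' {y})ᶜ := by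
            intro x hx hxy
            simp only [Set.mem_preimage, Set.mem_singleton_iff] at hxy
            exact hyC (hxy ▸ hx)
          refine measure_mono_null hsub ?_
          rw [measure_compl (hf (measurableSet_singleton y)) (measure_ne_top _ _), hy,
            measure_univ, tsub_self]
        rw [lintegral_indicator (hB.inter hpre) g]
        exact setLIntegral_measure_zero _ _ (measure_mono_null Set.inter_subset_right hC0)
    rw [lintegral_congr_ae h2, lintegral_indicator hC]
  -- condexp facts
  have hint : ∀ n, Integrable (Set.indicator (α n) (fun _ => (1 : ℝ))) μ :=
    fun n => (integrable_const (1 : ℝ)).indicator (hαmeas n)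
  have hsm : ∀ n, StronglyMeasurable[F ⊔ MeasurableSpace.comap f mY] (h n) :=
    fun n => stronglyMeasurable_condExp
  have hnonneg : ∀ n, 0 ≤ᵐ[μ] h n :=
    fun n => condExp_nonneg (Filter.Eventually.of_forall fun x => Set.indicator_nonneg (by simp) x)
  have hle1 : ∀ n, h n ≤ᵐ[μ] fun _ => (1 : ℝ) := by
    intro n
    have hmono : (Set.indicator (α n) (fun _ => (1 : ℝ))) ≤ᵐ[μ] fun _ => (1 : ℝ) := by
      refine Filter.Eventually.of_forall fun x => ?_
      by_cases hx : x ∈ α n <;> simp [Set.indicator_apply, hx]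
    have := condExp_mono (m := F ⊔ MeasurableSpace.comap f mY) (hint n)
      (integrable_const (1 : ℝ)) hmono
    rwa [condExp_const hG (1 : ℝ)] at this
  -- set-lintegral identity for the conditional expectation
  have hset : ∀ n, ∀ S : Set X, MeasurableSet[F ⊔ MeasurableSpace.comap f mY] S →
      ∫⁻ x in S, ENNReal.ofReal (h n x) ∂μ = μ (α n ∩ S) := by
    intro n S hS
    have hSm : MeasurableSet S := hG S hS
    have h1 : ∫⁻ x in S, ENNReal.ofReal (h n x) ∂μ = ENNReal.ofReal (∫ x in S, h n x ∂μ) :=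
      (ofReal_integral_eq_lintegral_ofReal integrable_condExp.integrableOn
        (ae_restrict_of_ae (hnonneg n))).symm
    rw [h1, setIntegral_condExp hG (hint n) hS]
    rw [setIntegral_indicator (hαmeas n), setIntegral_const, smul_eq_mul, mul_one,
      measureReal_def, ENNReal.ofReal_toReal (measure_ne_top _ _), Set.inter_comm]
  -- measurability in y of set-lintegrals
  have hmeaslin : ∀ (g : X → ℝ≥0∞), Measurable g → ∀ B : Set X, MeasurableSet B →
      Measurable fun y => ∫⁻ x in B, g x ∂(μy y) := by
    intro g hg B hB
    have h1 : Measurable fun ρ : Measure X => ∫⁻ x, B.indicator g x ∂ρ :=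
      Measure.measurable_lintegral (hg.indicator hB)
    have h2 := h1.comp hmeasμy
    simpa only [lintegral_indicator hB, Function.comp_def] using h2
  have hmG : ∀ n, Measurable[F ⊔ MeasurableSpace.comap f mY]
      fun x => ENNReal.ofReal (h n x) :=
    fun n => ENNReal.measurable_ofReal.comp (hsm n).measurable
  have hmXm : ∀ n, Measurable fun x => ENNReal.ofReal (h n x) :=
    fun n => ENNReal.measurable_ofReal.comp ((hsm n).mono hG).measurable
  have keyNB : ∀ (n : ℕ) (B : Set X), MeasurableSet[F] B →
      ∀ᵐ y ∂ν, ∫⁻ x in B, ENNReal.ofReal (h n x) ∂(μy y) = μy y (α n ∩ B) := by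
    intro n B hB
    have hBm : MeasurableSet B := hFle B hB
    refine ae_eq_of_forall_setLIntegral_eq_of_sigmaFinite
      (hmeaslin _ (hmXm n) B hBm) (hker _ ((hαmeas n).inter hBm)) ?_
    intro C hC _
    have hBG : MeasurableSet[F ⊔ MeasurableSpace.comap f mY] B :=
      (le_sup_left : F ≤ F ⊔ MeasurableSpace.comap f mY) B hB
    have hCG : MeasurableSet[F ⊔ MeasurableSpace.comap f mY] (f ⁻¹' C) :=
      (le_sup_right : MeasurableSpace.comap f mY ≤ F ⊔ MeasurableSpace.comap f mY) _ ⟨C, hC, rfl⟩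
    calc ∫⁻ y in C, ∫⁻ x in B, ENNReal.ofReal (h n x) ∂(μy y) ∂ν
        = ∫⁻ x in B ∩ f ⁻¹' C, ENNReal.ofReal (h n x) ∂μ := (hL3 _ (hmXm n) B hBm C hC).symm
      _ = μ (α n ∩ (B ∩ f ⁻¹' C)) := hset n _ (hBG.inter hCG)
      _ = μ ((α n ∩ B) ∩ f ⁻¹' C) := by rw [Set.inter_assoc]
      _ = ∫⁻ _ in (α n ∩ B) ∩ f ⁻¹' C, 1 ∂μ := (setLIntegral_one _).symm
      _ = ∫⁻ y in C, ∫⁻ _ in α n ∩ B, 1 ∂(μy y) ∂ν :=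
          hL3 _ measurable_const _ ((hαmeas n).inter hBm) C hC
      _ = ∫⁻ y in C, μy y (α n ∩ B) ∂ν :=
          lintegral_congr fun y => by rw [setLIntegral_one]
  -- countable generating π-system for F
  obtain ⟨b, hbc, hFb⟩ := hFcg.isCountablyGenerated
  have hPc : (generatePiSystem b).Countable := countable_generatePiSystem' hbc
  have hPm : ∀ B ∈ generatePiSystem b, MeasurableSet[F] B := by
    intro B hB
    refine @generatePiSystem_measurableSet X F b ?_ B hB
    intro s hs
    rw [hFb]
    exact MeasurableSpace.measurableSet_generateFrom hs
  set Q : Set (Set X) := insert Set.univ (generatePiSystem b) with hQ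
  have hQc : Q.Countable := hPc.insert _
  have hQm : ∀ B ∈ Q, MeasurableSet[F] B := by
    rintro B (rfl | hB)
    · exact @MeasurableSet.univ X F
    · exact hPm B hB
  have keyQ : ∀ᵐ y ∂ν, ∀ B ∈ Q, ∀ n : ℕ,
      ∫⁻ x in B, ENNReal.ofReal (h n x) ∂(μy y) = μy y (α n ∩ B) := by
    rw [ae_ball_iff hQc]
    intro B hB
    rw [ae_all_iff]
    intro n
    exact keyNB n B (hQm B hB)
  have hbounds : ∀ᵐ y ∂ν, ∀ n : ℕ, ∀ᵐ x ∂(μy y), 0 ≤ h n x ∧ h n x ≤ 1 := by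
    rw [ae_all_iff]
    intro n
    exact hae_trans ((hnonneg n).and (hle1 n))
  have hFP : F = MeasurableSpace.generateFrom (generatePiSystem b) := by
    rw [generateFrom_generatePiSystem_eq, ← hFb]
  -- the main pointwise (in y) identification of conditional expectations
  have main : ∀ᵐ y ∂ν, ∀ n : ℕ,
      h n =ᵐ[μy y] (μy y)[Set.indicator (α n) (fun _ => (1 : ℝ))|F] := by
    filter_upwards [hfib, keyQ, hbounds] with y hy hQy hby
    intro n
    haveI := hprob y
    have huniv : ∫⁻ x, ENNReal.ofReal (h n x) ∂(μy y) = μy y (α n) := by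
      have := hQy Set.univ (Set.mem_insert _ _) n
      simpa using this
    have hext : ∀ B : Set X, MeasurableSet[F] B →
        ∫⁻ x in B, ENNReal.ofReal (h n x) ∂(μy y) = μy y (α n ∩ B) := by
      intro B hB
      refine MeasurableSpace.induction_on_inter (m := F)
        (C := fun B _ => ∫⁻ x in B, ENNReal.ofReal (h n x) ∂(μy y) = μy y (α n ∩ B))
        (s := generatePiSystem b) hFP (isPiSystem_generatePiSystem b) ?_ ?_ ?_ ?_ B hB
      · simp
      · exact fun t ht => hQy t (Set.mem_insert_of_mem _ ht) n
      · intro t htm hCt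
        have htm' : MeasurableSet t := hFle t htm
        have hadd := lintegral_add_compl (μ := μy y)
          (fun x => ENNReal.ofReal (h n x)) htm'
        have hμadd : μy y (α n ∩ t) + μy y (α n ∩ tᶜ) = μy y (α n) := by
          have := measure_inter_add_diff (μ := μy y) (α n) htm'
          rwa [Set.diff_eq] at this
        rw [huniv, hCt, ← hμadd] at hadd
        exact (ENNReal.add_right_inj (measure_ne_top _ _)).1 hadd
      · intro g hgd hgm hCg
        have hgm' : ∀ i, MeasurableSet (g i) := fun i => hFle _ (hgm i)
        rw [lintegral_iUnion hgm' hgd, Set.inter_iUnion,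
          measure_iUnion
            (fun i j hij => (hgd hij).mono Set.inter_subset_right Set.inter_subset_right)
            (fun i => (hαmeas n).inter (hgm' i))]
        exact tsum_congr fun i => hCg i
    obtain ⟨H', hH'm, hH'eq⟩ := exists_F_version F mY f y (hmG n)
    have hfibm : MeasurableSet (f ⁻¹' {y}) := hf (measurableSet_singleton y)
    have haefib : ∀ᵐ x ∂(μy y), x ∈ f ⁻¹' {y} := by
      rw [ae_iff]
      have he : {x | ¬ x ∈ f ⁻¹' {y}} = (f ⁻¹' {y})ᶜ := rfl
      rw [he, measure_compl hfibm (measure_ne_top _ _), hy, measure_univ, tsub_self]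
    have hgm' : AEStronglyMeasurable[F] (h n) (μy y) := by
      refine ⟨fun x => (H' x).toReal, (Measurable.ennreal_toReal hH'm).stronglyMeasurable, ?_⟩
      filter_upwards [haefib, hby n] with x hxf hxb
      rw [← hH'eq x hxf, ENNReal.toReal_ofReal hxb.1]
    have hintc : Integrable (h n) (μy y) := by
      refine Integrable.mono' (integrable_const (1 : ℝ))
        ((hsm n).mono hG).aestronglyMeasurable ?_
      filter_upwards [hby n] with x hx
      rw [Real.norm_eq_abs, abs_le]
      exact ⟨by linarith [hx.1], hx.2⟩
    refine ae_eq_condExp_of_forall_setIntegral_eq hFle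
      ((integrable_const (1 : ℝ)).indicator (hαmeas n))
      (fun s _ _ => hintc.integrableOn) (fun s hs _ => ?_) hgm'
    have hL : ∫ x in s, h n x ∂(μy y)
        = (∫⁻ x in s, ENNReal.ofReal (h n x) ∂(μy y)).toReal := by
      rw [integral_eq_lintegral_of_nonneg_ae
        (ae_restrict_of_ae ((hby n).mono fun x hx => hx.1))
        ((hsm n).mono hG).aestronglyMeasurable.restrict]
    rw [hL, hext s hs, setIntegral_indicator (hαmeas n), setIntegral_const, smul_eq_mul,
      mul_one, Set.inter_comm, measureReal_def]
  -- final assembly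
  have hPsi : Measurable fun x => ∑' n : ℕ, ENNReal.ofReal (Real.negMulLog (h n x)) :=
    Measurable.ennreal_tsum fun n =>
      ENNReal.measurable_ofReal.comp
        (Real.continuous_negMulLog.measurable.comp ((hsm n).mono hG).measurable)
  calc condEnt μ (F ⊔ MeasurableSpace.comap f mY) α
      = ∫⁻ x, ∑' n : ℕ, ENNReal.ofReal (Real.negMulLog (h n x)) ∂μ := rfl
    _ = ∫⁻ y, ∫⁻ x, ∑' n : ℕ, ENNReal.ofReal (Real.negMulLog (h n x)) ∂(μy y) ∂ν :=
        hL0 _ hPsi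
    _ = ∫⁻ y, condEnt (μy y) F α ∂ν := by
        refine lintegral_congr_ae ?_
        filter_upwards [main] with y hy
        refine lintegral_congr_ae ?_
        have hall : ∀ᵐ x ∂(μy y), ∀ n : ℕ,
            h n x = ((μy y)[Set.indicator (α n) (fun _ => (1 : ℝ))|F]) x :=
          ae_all_iff.2 hy
        filter_upwards [hall] with x hx
        exact tsum_congr fun n => by rw [hx n]
end

section
/- Let G act measure-preservingly on a standard probability space (X, μ) and let Γ ≤ G be a finite-index subgroup. If G ↷ (X, μ) factors onto the finite action G ↷ (G/Δ, u_{G/Δ}), where Δ is the maximal normal subgroup of G contained in Γ, then there is a Γ-invariant Borel partition {X_{Γg} : Γg ∈ Γ\G} of X such that each X_{Γg} meets μ-almost-every G-orbit, μ(X_{Γg}) = [G : Γ]^{-1}, and I_Γ = σ({X_{Γg}}) ∨ I_G modulo μ-null sets. -/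
open MeasureTheory Set
open scoped ENNReal NNReal

theorem stmt5 {G X : Type*} [Group G] [Countable G] [MulAction G X]
    [mX : MeasurableSpace X] [StandardBorelSpace X]
    (μ : Measure X) [IsProbabilityMeasure μ] (hpmp : IsPmp G μ)
    (Γ : Subgroup G) (hΓ : Γ.FiniteIndex)
    (f : X → G ⧸ Γ.normalCore)
    (hfm : ∀ c : G ⧸ Γ.normalCore, MeasurableSet (f ⁻¹' {c}))
    (hfe : ∀ (g : G) (x : X), f (g • x) = g • f x)
    (hfu : ∀ c : G ⧸ Γ.normalCore, μ (f ⁻¹' {c}) = ((Γ.normalCore.index : ℝ≥0∞))⁻¹) :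
    ∃ P : Quotient (QuotientGroup.rightRel Γ) → Set X,
      IsCtblPart P ∧
      (∀ c, ∀ γ : Γ, ((γ : G) • ·) ⁻¹' (P c) = P c) ∧
      (∀ c, μ {x : X | ¬ ∃ g : G, g • x ∈ P c} = 0) ∧
      (∀ c, μ (P c) = ((Γ.index : ℝ≥0∞))⁻¹) ∧
      LeModNull μ (invSigma Γ X) (partSigma P ⊔ invSigma G X) ∧
      LeModNull μ (partSigma P ⊔ invSigma G X) (invSigma Γ X) := by   classical
  haveI := hΓ
  -- the projection from `G ⧸ Γ.normalCore` (left cosets) to right cosets of `Γ`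
  have hwd : ∀ a b : G, QuotientGroup.leftRel Γ.normalCore a b → QuotientGroup.rightRel Γ a b := by
    intro a b h
    rw [QuotientGroup.leftRel_apply] at h
    rw [QuotientGroup.rightRel_apply]
    have h2 : a * (a⁻¹ * b) * a⁻¹ ∈ Γ.normalCore :=
      (Subgroup.normalCore_normal Γ).conj_mem _ h a
    have h3 : b * a⁻¹ ∈ Γ.normalCore := by
      have : a * (a⁻¹ * b) * a⁻¹ = b * a⁻¹ := by group
      rwa [this] at h2
    exact Γ.normalCore_le h3
  let π : G ⧸ Γ.normalCore → Quotient (QuotientGroup.rightRel Γ) := Quotient.map' id hwd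
  have hπmk : ∀ g : G, π (QuotientGroup.mk g) = Quotient.mk'' g := fun g => rfl
  have hπeq : ∀ a b : G,
      (Quotient.mk'' a : Quotient (QuotientGroup.rightRel Γ)) = Quotient.mk'' b ↔
        b * a⁻¹ ∈ Γ := by
    intro a b
    rw [Quotient.eq'']
    exact QuotientGroup.rightRel_apply
  set P : Quotient (QuotientGroup.rightRel Γ) → Set X := fun c => f ⁻¹' (π ⁻¹' {c}) with hPdef
  have hPmem : ∀ c x, x ∈ P c ↔ π (f x) = c := fun _ _ => Iff.rfl
  -- measurability of the pieces
  have hPmeas : ∀ c, MeasurableSet (P c) := by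
    intro c
    have hdec : P c = ⋃ d ∈ π ⁻¹' {c}, f ⁻¹' {d} := by
      ext x
      simp only [hPdef, Set.mem_preimage, Set.mem_singleton_iff, Set.mem_iUnion]
      constructor
      · intro h; exact ⟨f x, h, rfl⟩
      · rintro ⟨d, hd, he⟩; rw [he]; exact hd
    rw [hdec]
    exact MeasurableSet.biUnion (Set.to_countable _) fun d _ => hfm d
  -- Γ-invariance of the pieces
  have hkey : ∀ (γ : Γ) (d : G ⧸ Γ.normalCore), π ((γ : G) • d) = π d := by
    intro γ d
    induction d using Quotient.inductionOn' with
    | h h =>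
      show π ((γ : G) • QuotientGroup.mk h) = π (QuotientGroup.mk h)
      rw [MulAction.Quotient.smul_mk, hπmk, hπmk]
      refine (hπeq _ _).mpr ?_
      simp only [smul_eq_mul]
      have : h * ((γ : G) * h)⁻¹ = (γ : G)⁻¹ := by group
      rw [this]
      exact inv_mem γ.2
  have hPinv : ∀ c (γ : Γ), (((γ : G)) • ·) ⁻¹' (P c) = P c := by
    intro c γ
    ext x
    simp only [Set.mem_preimage, hPdef, Set.mem_singleton_iff]
    rw [hfe, hkey]
  -- every piece meets every orbit
  have hPorb : ∀ c, {x : X | ¬ ∃ g : G, g • x ∈ P c} = ∅ := by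
    intro c
    induction c using Quotient.inductionOn' with
    | h k =>
      ext x
      simp only [Set.mem_setOf_eq, Set.mem_empty_iff_false, iff_false, not_not]
      obtain ⟨h, hh⟩ := QuotientGroup.mk_surjective (f x)
      refine ⟨k * h⁻¹, ?_⟩
      rw [hPmem, hfe, ← hh]
      show π ((k * h⁻¹) • QuotientGroup.mk h) = Quotient.mk'' k
      rw [MulAction.Quotient.smul_mk, hπmk]
      congr 1
      simp only [smul_eq_mul]
      group
  -- finiteness instances
  haveI : Finite (G ⧸ Γ.normalCore) := Subgroup.finite_quotient_of_finiteIndex (H := Γ.normalCore)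
  haveI : Fintype (G ⧸ Γ.normalCore) := Fintype.ofFinite _
  -- the measure of each piece
  have hDi0 : Γ.normalCore.index ≠ 0 := Subgroup.index_ne_zero_of_finite
  have hrel : Γ.normalCore.relIndex Γ * Γ.index = Γ.normalCore.index :=
    Subgroup.relIndex_mul_index (Γ.normalCore_le)
  have hr0 : Γ.normalCore.relIndex Γ ≠ 0 := by
    intro h
    rw [← hrel, h, zero_mul] at hDi0
    exact hDi0 rfl
  have hi0 : Γ.index ≠ 0 := by
    intro h
    rw [← hrel, h, mul_zero] at hDi0
    exact hDi0 rfl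
  have hPmes : ∀ c, μ (P c) = ((Γ.index : ℝ≥0∞))⁻¹ := by
    intro c
    induction c using Quotient.inductionOn' with
    | h s =>
      -- the fiber of π over ⟦s⟧ is equinumerous with Γ ⧸ (Γ.normalCore.subgroupOf Γ)
      have hcard : Nat.card {d : G ⧸ Γ.normalCore // π d = Quotient.mk'' s} =
          Γ.normalCore.relIndex Γ := by
        rw [Subgroup.relIndex, Subgroup.index_eq_card]
        have hF0p : ∀ γ : Γ, π (QuotientGroup.mk ((γ : G) * s)) = Quotient.mk'' s := by
          intro γ
          rw [hπmk]
          refine (hπeq _ _).mpr ?_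
          have : s * ((γ : G) * s)⁻¹ = (γ : G)⁻¹ := by group
          rw [this]
          exact inv_mem γ.2
        let F0 : Γ → {d : G ⧸ Γ.normalCore // π d = Quotient.mk'' s} :=
          fun γ => ⟨QuotientGroup.mk ((γ : G) * s), hF0p γ⟩
        have hwd2 : ∀ γ γ' : Γ,
            QuotientGroup.leftRel (Γ.normalCore.subgroupOf Γ) γ γ' → F0 γ = F0 γ' := by
          intro γ γ' h
          rw [QuotientGroup.leftRel_apply] at h
          have h' : (γ : G)⁻¹ * (γ' : G) ∈ Γ.normalCore := Subgroup.mem_subgroupOf.mp h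
          refine Subtype.ext ?_
          show QuotientGroup.mk ((γ : G) * s) = QuotientGroup.mk ((γ' : G) * s)
          rw [QuotientGroup.eq]
          have hc : s⁻¹ * ((γ : G)⁻¹ * (γ' : G)) * s⁻¹⁻¹ ∈ Γ.normalCore :=
            (Subgroup.normalCore_normal Γ).conj_mem _ h' s⁻¹
          have heq : s⁻¹ * ((γ : G)⁻¹ * (γ' : G)) * s⁻¹⁻¹ =
              ((γ : G) * s)⁻¹ * ((γ' : G) * s) := by group
          rwa [heq] at hc
        let F : (↥Γ ⧸ (Γ.normalCore.subgroupOf Γ)) → {d : G ⧸ Γ.normalCore // π d = Quotient.mk'' s} :=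
          fun q => Quotient.liftOn' q F0 hwd2
        have hFmk : ∀ γ : Γ, F (Quotient.mk'' γ) = F0 γ := fun γ => rfl
        have hFinj : Function.Injective F := by
          intro q q'
          induction q using Quotient.inductionOn' with
          | h γ =>
            induction q' using Quotient.inductionOn' with
            | h γ' =>
              intro h
              rw [hFmk, hFmk] at h
              have h1 : QuotientGroup.mk ((γ : G) * s) =
                  (QuotientGroup.mk ((γ' : G) * s) : G ⧸ Γ.normalCore) :=
                congrArg Subtype.val h
              rw [QuotientGroup.eq] at h1
              have hc : s * (((γ : G) * s)⁻¹ * ((γ' : G) * s)) * s⁻¹ ∈ Γ.normalCore :=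
                (Subgroup.normalCore_normal Γ).conj_mem _ h1 s
              have he : s * (((γ : G) * s)⁻¹ * ((γ' : G) * s)) * s⁻¹ =
                  (γ : G)⁻¹ * (γ' : G) := by group
              rw [he] at hc
              refine Quotient.sound' ?_
              rw [QuotientGroup.leftRel_apply]
              exact Subgroup.mem_subgroupOf.mpr hc
        have hFsurj : Function.Surjective F := by
          rintro ⟨d, hd⟩
          induction d using Quotient.inductionOn' with
          | h h =>
            have hd' : (Quotient.mk'' h : Quotient (QuotientGroup.rightRel Γ)) =
                Quotient.mk'' s := hd
            have hsh : s * h⁻¹ ∈ Γ := (hπeq _ _).mp hd'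
            have hmem : h * s⁻¹ ∈ Γ := by
              have he : (s * h⁻¹)⁻¹ = h * s⁻¹ := by group
              rw [← he]
              exact inv_mem hsh
            refine ⟨Quotient.mk'' (⟨h * s⁻¹, hmem⟩ : Γ), Subtype.ext ?_⟩
            rw [hFmk]
            show QuotientGroup.mk ((h * s⁻¹) * s) = Quotient.mk'' h
            have he : h * s⁻¹ * s = h := by group
            rw [he]
        exact Nat.card_congr (Equiv.ofBijective F ⟨hFinj, hFsurj⟩).symm
      -- decompose P ⟦s⟧ into fibers of f
      have hdecomp : P (Quotient.mk'' s) =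
          ⋃ d : {d : G ⧸ Γ.normalCore // π d = Quotient.mk'' s}, f ⁻¹' {(d : G ⧸ Γ.normalCore)} := by
        ext x
        simp only [hPdef, Set.mem_preimage, Set.mem_singleton_iff, Set.mem_iUnion,
          Subtype.exists]
        constructor
        · intro h; exact ⟨f x, h, rfl⟩
        · rintro ⟨d, hd, he⟩; rw [he]; exact hd
      have hdisj : Pairwise (Function.onFun Disjoint
          (fun d : {d : G ⧸ Γ.normalCore // π d = Quotient.mk'' s} => f ⁻¹' {(d : G ⧸ Γ.normalCore)})) := by
        intro d d' hne
        refine Set.disjoint_left.mpr fun x hx hx' => ?_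
        exact hne (Subtype.ext (hx.symm.trans hx'))
      rw [hdecomp, measure_iUnion hdisj fun d => hfm _]
      have hconst : ∀ d : {d : G ⧸ Γ.normalCore // π d = Quotient.mk'' s},
          μ (f ⁻¹' {(d : G ⧸ Γ.normalCore)}) = ((Γ.normalCore.index : ℝ≥0∞))⁻¹ := fun d => hfu _
      rw [tsum_congr hconst, tsum_fintype, Finset.sum_const, Finset.card_univ,
        nsmul_eq_mul]
      have hfc : (Fintype.card {d : G ⧸ Γ.normalCore // π d = Quotient.mk'' s} : ℝ≥0∞) =
          ((Γ.normalCore.relIndex Γ : ℕ) : ℝ≥0∞) := by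
        rw [← Nat.card_eq_fintype_card, hcard]
      rw [hfc, ← hrel]
      have hrcast0 : ((Γ.normalCore.relIndex Γ : ℕ) : ℝ≥0∞) ≠ 0 := Nat.cast_ne_zero.mpr hr0
      have hrcastt : ((Γ.normalCore.relIndex Γ : ℕ) : ℝ≥0∞) ≠ ⊤ := ENNReal.natCast_ne_top _
      rw [Nat.cast_mul, ENNReal.mul_inv (Or.inl hrcast0) (Or.inl hrcastt),
        ← mul_assoc, ENNReal.mul_inv_cancel hrcast0 hrcastt, one_mul]
  -- a characterization of the invariant σ-algebras
  have hinvΓ : ∀ s : Set X, MeasurableSet[invSigma Γ X] s →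
      MeasurableSet s ∧ ∀ γ : Γ, ((γ : G) • ·) ⁻¹' s = s := by
    intro s hs
    let m : MeasurableSpace X :=
      { MeasurableSet' := fun t => MeasurableSet t ∧ ∀ γ : Γ, ((γ : G) • ·) ⁻¹' t = t
        measurableSet_empty := ⟨MeasurableSet.empty, fun γ => by simp⟩
        measurableSet_compl := fun t ht =>
          ⟨ht.1.compl, fun γ => by rw [Set.preimage_compl, ht.2 γ]⟩
        measurableSet_iUnion := fun t ht =>
          ⟨MeasurableSet.iUnion fun i => (ht i).1, fun γ => by
            rw [Set.preimage_iUnion]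
            exact Set.iUnion_congr fun i => (ht i).2 γ⟩ }
    have hle : @invSigma ↥Γ X _ _ mX ≤ m := by
      refine MeasurableSpace.generateFrom_le ?_
      rintro t ⟨htm, htinv⟩
      exact ⟨htm, fun γ => htinv γ⟩
    exact hle s hs
  have hinvG : ∀ s : Set X, MeasurableSet[invSigma G X] s →
      MeasurableSet s ∧ ∀ g : G, (g • ·) ⁻¹' s = s := by
    intro s hs
    let m : MeasurableSpace X :=
      { MeasurableSet' := fun t => MeasurableSet t ∧ ∀ g : G, (g • ·) ⁻¹' t = t
        measurableSet_empty := ⟨MeasurableSet.empty, fun g => by simp⟩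
        measurableSet_compl := fun t ht =>
          ⟨ht.1.compl, fun g => by rw [Set.preimage_compl, ht.2 g]⟩
        measurableSet_iUnion := fun t ht =>
          ⟨MeasurableSet.iUnion fun i => (ht i).1, fun g => by
            rw [Set.preimage_iUnion]
            exact Set.iUnion_congr fun i => (ht i).2 g⟩ }
    have hle : @invSigma G X _ _ mX ≤ m := by
      refine MeasurableSpace.generateFrom_le ?_
      rintro t ⟨htm, htinv⟩
      exact ⟨htm, htinv⟩
    exact hle s hs
  haveI : Finite (G ⧸ Γ) := Subgroup.finite_quotient_of_finiteIndex (H := Γ)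
  haveI : Finite (Quotient (QuotientGroup.rightRel Γ)) :=
    Finite.of_equiv _ (QuotientGroup.quotientRightRelEquivQuotientLeftRel Γ).symm
  refine ⟨P, ⟨hPmeas, ?_, ?_⟩, hPinv, fun c => by rw [hPorb c]; exact measure_empty,
    hPmes, ?_, ?_⟩
  · -- pairwise disjoint
    intro c c' hne
    refine Set.disjoint_left.mpr fun x hx hx' => ?_
    exact hne ((hPmem c x).mp hx ▸ (hPmem c' x).mp hx' ▸ rfl)
  · -- covers X
    refine Set.eq_univ_iff_forall.mpr fun x => ?_
    exact Set.mem_iUnion.mpr ⟨π (f x), rfl⟩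
  · -- I_Γ ≤ σ(P) ⊔ I_G  mod null
    intro s hs
    obtain ⟨hsB, hsinv⟩ := hinvΓ s hs
    have hsinv' : ∀ g : G, g ∈ Γ → ∀ x : X, g • x ∈ s → x ∈ s := by
      intro g hg x hx
      have h1 : g • x ∈ ((((⟨g⁻¹, inv_mem hg⟩ : Γ) : G)) • ·) ⁻¹' s := by
        rw [hsinv ⟨g⁻¹, inv_mem hg⟩]
        exact hx
      simpa [inv_smul_smul] using h1
    set C : Quotient (QuotientGroup.rightRel Γ) → Set X :=
      fun c => ⋃ g : G, (g • ·) ⁻¹' (s ∩ P c) with hCdef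
    refine ⟨⋃ c, C c ∩ P c, ?_, ?_⟩
    · refine MeasurableSet.iUnion fun c => MeasurableSet.inter ?_ ?_
      · refine (le_sup_right :
            invSigma G X ≤ partSigma P ⊔ invSigma G X) _ ?_
        refine MeasurableSpace.measurableSet_generateFrom ⟨?_, ?_⟩
        · exact MeasurableSet.iUnion fun g => (hpmp g).measurable (hsB.inter (hPmeas c))
        · intro g'
          ext x
          simp only [hCdef, Set.mem_iUnion, Set.mem_preimage]
          constructor
          · rintro ⟨g, hg⟩
            exact ⟨g * g', by rwa [mul_smul]⟩
          · rintro ⟨g, hg⟩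
            refine ⟨g * g'⁻¹, ?_⟩
            rwa [mul_smul, inv_smul_smul]
      · refine (le_sup_left :
            partSigma P ≤ partSigma P ⊔ invSigma G X) _ ?_
        exact MeasurableSpace.measurableSet_generateFrom ⟨c, rfl⟩
    · have hCP : ∀ c, C c ∩ P c = s ∩ P c := by
        intro c
        ext x
        constructor
        · rintro ⟨hxC, hxP⟩
          obtain ⟨g, hg⟩ := Set.mem_iUnion.mp hxC
          have hgs : g • x ∈ s := hg.1
          have hgP : π (f (g • x)) = c := (hPmem c _).mp hg.2
          have hxPc : π (f x) = c := (hPmem c x).mp hxP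
          obtain ⟨h, hh⟩ := QuotientGroup.mk_surjective (f x)
          have h1 : (Quotient.mk'' (g * h) : Quotient (QuotientGroup.rightRel Γ)) =
              Quotient.mk'' h := by
            have e1 : π (f (g • x)) = Quotient.mk'' (g * h) := by
              rw [hfe, ← hh]
              show π (g • QuotientGroup.mk h) = _
              rw [MulAction.Quotient.smul_mk, hπmk]
              rfl
            have e2 : π (f x) = Quotient.mk'' h := by rw [← hh, hπmk]
            rw [e1] at hgP
            rw [e2] at hxPc
            rw [hgP, hxPc]
          have hmem : g⁻¹ ∈ Γ := by
            have h2 : h * (g * h)⁻¹ ∈ Γ := (hπeq _ _).mp h1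
            have : h * (g * h)⁻¹ = g⁻¹ := by group
            rwa [this] at h2
          have hmem' : g ∈ Γ := by simpa using inv_mem hmem
          exact ⟨hsinv' g hmem' x hgs, hxP⟩
        · rintro ⟨hxs, hxP⟩
          refine ⟨Set.mem_iUnion.mpr ⟨1, ?_⟩, hxP⟩
          simpa [one_smul] using Set.mem_inter hxs hxP
      have ht : (⋃ c, C c ∩ P c) = s := by
        have : (⋃ c, C c ∩ P c) = ⋃ c, s ∩ P c := Set.iUnion_congr hCP
        rw [this, ← Set.inter_iUnion]
        have hu : (⋃ c, P c) = Set.univ :=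
          Set.eq_univ_iff_forall.mpr fun x => Set.mem_iUnion.mpr ⟨π (f x), rfl⟩
        rw [hu, Set.inter_univ]
      rw [ht, symmDiff_self]
      simp
  · -- σ(P) ⊔ I_G ≤ I_Γ  mod null
    intro s hs
    refine ⟨s, ?_, by rw [symmDiff_self]; simp⟩
    have h1 : partSigma P ≤ invSigma Γ X := by
      refine MeasurableSpace.generateFrom_le ?_
      rintro t ⟨n, rfl⟩
      refine MeasurableSpace.measurableSet_generateFrom ⟨hPmeas n, ?_⟩
      intro γ
      have : ((γ • ·) : X → X) = (((γ : G)) • ·) := funext fun x => Subgroup.smul_def γ x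
      rw [this]
      exact hPinv n γ
    have h2 : invSigma G X ≤ invSigma Γ X := by
      refine MeasurableSpace.generateFrom_le ?_
      rintro t ⟨htm, htinv⟩
      refine MeasurableSpace.measurableSet_generateFrom ⟨htm, ?_⟩
      intro γ
      have : ((γ • ·) : X → X) = (((γ : G)) • ·) := funext fun x => Subgroup.smul_def γ x
      rw [this]
      exact htinv _
    exact (sup_le h1 h2) s hs
end

section
/- Let G ↷ (X, μ) be a p.m.p. action and Γ ≤ G a finite-index subgroup. Suppose there is a Γ-invariant Borel partition {X_{Γg} : Γg ∈ Γ\G} of X such that each X_{Γg} meets almost-every G-orbit, μ(X_{Γg}) = [G : Γ]^{-1}, and I_Γ = {X_{Γg}} ∨ I_G. Then for almost-every G-ergodic component ν of μ, ν has precisely [G : Γ] many Γ-ergodic components. -/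
open MeasureTheory Set
open scoped ENNReal NNReal

section AuxStmt6

variable {G X : Type*} [Group G] [MulAction G X] [mX : MeasurableSpace X]

private lemma mem_smul_iff6 {s : Set X} {g : G} (h : (g • ·) ⁻¹' s = s) (y : X) :
    g • y ∈ s ↔ y ∈ s := by
  constructor
  · intro hy; rw [← h]; exact hy
  · intro hy; have : y ∈ (g • ·) ⁻¹' s := by rw [h]; exact hy
    exact this

private lemma quant_aux6 (Γ : Subgroup G) [Fintype (Quotient (QuotientGroup.rightRel Γ))]
    (ν : Measure X) [IsProbabilityMeasure ν]
    (hpmp : IsPmp G ν) (herg : ErgAction G ν)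
    (s : Set X) (hs : MeasurableSet s)
    (hsinv : ∀ γ : Γ, ((γ : G) • ·) ⁻¹' s = s) :
    ∃ j : ℕ, (Nat.card (Quotient (QuotientGroup.rightRel Γ)) : ℝ≥0∞) * ν s = j := by
  classical
  set Q := Quotient (QuotientGroup.rightRel Γ) with hQ
  set σ : Q → G := Quotient.out with hσ
  -- translation maps on the quotient
  have hcompat : ∀ h : G, ∀ a b : G, QuotientGroup.rightRel Γ a b →
      QuotientGroup.rightRel Γ (a * h) (b * h) := by
    intro h a b hab
    rw [QuotientGroup.rightRel_apply] at hab ⊢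
    have : b * h * (a * h)⁻¹ = b * a⁻¹ := by group
    rw [this]; exact hab
  set φ : G → Q → Q := fun h => Quotient.map' (fun a => a * h) (hcompat h) with hφ
  have hφmk : ∀ (h : G) (a : G),
      φ h (Quotient.mk'' a) = Quotient.mk'' (a * h) := by
    intro h a; exact Quotient.map'_mk'' _ _ _
  have hφout : ∀ (h : G) (c : Q), φ h c = Quotient.mk'' (σ c * h) := by
    intro h c
    conv_lhs => rw [← Quotient.out_eq' c]
    exact hφmk h _
  have hφbij : ∀ h : G, Function.Bijective (φ h) := by
    intro h
    refine Function.bijective_iff_has_inverse.mpr ⟨φ h⁻¹, ?_, ?_⟩ <;>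
      · intro c
        induction c using Quotient.inductionOn' with
        | h a => simp only [hφmk, mul_assoc, mul_inv_cancel, inv_mul_cancel, mul_one]
  -- the counting function
  set n : X → ℕ := fun x => ∑ c : Q, if σ c • x ∈ s then 1 else 0 with hn
  have hmeasc : ∀ g : G, MeasurableSet ((fun x => g • x) ⁻¹' s) :=
    fun g => (hpmp g).measurable hs
  have hnmeas : Measurable n := by
    apply Finset.measurable_sum
    intro c _
    have : (fun x => if σ c • x ∈ s then (1:ℕ) else 0)
        = ((fun x => σ c • x) ⁻¹' s).indicator (fun _ => 1) := by
      ext x; rw [Set.indicator_apply]; rfl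
    rw [this]
    exact measurable_const.indicator (hmeasc (σ c))
  -- membership transfer along translation
  have hmem : ∀ (g : G) (c : Q) (x : X),
      σ (φ g c) • x ∈ s ↔ (σ c * g) • x ∈ s := by
    intro g c x
    have hout : (Quotient.mk'' (σ (φ g c)) : Q) = Quotient.mk'' (σ c * g) := by
      rw [Quotient.out_eq', hφout]
    have hrel : QuotientGroup.rightRel Γ (σ (φ g c)) (σ c * g) := Quotient.eq''.mp hout
    rw [QuotientGroup.rightRel_apply] at hrel
    set γ : Γ := ⟨σ c * g * (σ (φ g c))⁻¹, hrel⟩ with hγ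
    have hγd : (γ : G) * σ (φ g c) = σ c * g := by
      simp [hγ, inv_mul_cancel_right]
    have : (σ c * g) • x = (γ : G) • (σ (φ g c) • x) := by
      rw [smul_smul, hγd]
    rw [this]
    exact (mem_smul_iff6 (hsinv γ) _).symm
  -- invariance of n
  have hninv : ∀ (g : G) (x : X), n (g • x) = n x := by
    intro g x
    have h1 : n (g • x) = ∑ c : Q, if σ (φ g c) • x ∈ s then 1 else 0 := by
      rw [hn]
      refine Finset.sum_congr rfl fun c _ => ?_
      have : σ c • g • x = (σ c * g) • x := smul_smul _ _ _
      rw [this]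
      exact if_congr (hmem g c x).symm rfl rfl
    rw [h1]
    exact (hφbij g).sum_comp fun c => if σ c • x ∈ s then 1 else 0
  -- level sets are G-invariant
  have hL : ∀ j : ℕ, MeasurableSet (n ⁻¹' {j}) :=
    fun j => hnmeas (measurableSet_singleton j)
  have hLinv : ∀ (j : ℕ) (g : G), (g • ·) ⁻¹' (n ⁻¹' {j}) = n ⁻¹' {j} := by
    intro j g; ext x
    simp only [Set.mem_preimage, Set.mem_singleton_iff, hninv]
  have hbound : ∀ x, n x ≤ Fintype.card Q := by
    intro x
    calc n x ≤ ∑ _c : Q, 1 := Finset.sum_le_sum (fun c _ => by split <;> simp)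
    _ = Fintype.card Q := by simp
  -- some level set is conull
  have hex : ∃ j ∈ Finset.range (Fintype.card Q + 1), ν (n ⁻¹' {j}) ≠ 0 := by
    by_contra hcon
    push_neg at hcon
    have huniv : (Set.univ : Set X) ⊆ ⋃ j ∈ Finset.range (Fintype.card Q + 1), n ⁻¹' {j} := by
      intro x _
      exact Set.mem_biUnion (Finset.mem_range.mpr (Nat.lt_succ_of_le (hbound x))) rfl
    have h1 : (1 : ℝ≥0∞) ≤ ν (⋃ j ∈ Finset.range (Fintype.card Q + 1), n ⁻¹' {j}) := by
      rw [← measure_univ (μ := ν)]; exact measure_mono huniv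
    have h2 := measure_biUnion_finset_le (μ := ν) (Finset.range (Fintype.card Q + 1))
      (fun j => n ⁻¹' {j})
    rw [Finset.sum_eq_zero (fun j hj => hcon j hj)] at h2
    exact absurd (le_trans h1 h2) (by simp)
  obtain ⟨j, _, hj⟩ := hex
  rcases herg _ (hL j) (fun g => hLinv j g) with h0 | h1
  · exact absurd h0 hj
  refine ⟨j, ?_⟩
  show (Nat.card Q : ℝ≥0∞) * ν s = (j : ℝ≥0∞)
  rw [Nat.card_eq_fintype_card]
  have hae : (fun x => (n x : ℝ≥0∞)) =ᵐ[ν] fun _ => (j : ℝ≥0∞) := by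
    rw [Filter.EventuallyEq, ae_iff]
    refine measure_mono_null ?_ h1
    intro x hx
    simp only [Set.mem_setOf_eq] at hx
    simp only [Set.mem_compl_iff, Set.mem_preimage, Set.mem_singleton_iff]
    intro h; exact hx (by rw [h])
  calc (Fintype.card Q : ℝ≥0∞) * ν s
      = ∑ c : Q, ν ((fun x => σ c • x) ⁻¹' s) := by
        rw [Finset.sum_congr rfl
          (fun c _ => (hpmp (σ c)).measure_preimage hs.nullMeasurableSet),
          Finset.sum_const, Finset.card_univ, nsmul_eq_mul]
  _ = ∫⁻ x, (n x : ℝ≥0∞) ∂ν := by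
        have hcast : ∀ x, ((n x : ℕ) : ℝ≥0∞)
            = ∑ c : Q, ((fun y => σ c • y) ⁻¹' s).indicator (fun _ => (1:ℝ≥0∞)) x := by
          intro x
          rw [hn]
          push_cast
          refine Finset.sum_congr rfl fun c _ => ?_
          rw [Set.indicator_apply]
          split <;> simp_all [Set.mem_preimage]
        rw [lintegral_congr hcast,
          lintegral_finset_sum _ (fun c _ => measurable_const.indicator (hmeasc (σ c)))]
        refine (Finset.sum_congr rfl fun c _ => ?_).symm
        rw [lintegral_indicator_const (hmeasc (σ c)), one_mul]
  _ = ∫⁻ _x, (j : ℝ≥0∞) ∂ν := lintegral_congr_ae hae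
  _ = j := by simp

end AuxStmt6

theorem stmt6 {G X : Type*} [Group G] [Countable G] [MulAction G X]
    [mX : MeasurableSpace X] [StandardBorelSpace X]
    (μ : Measure X) [IsProbabilityMeasure μ] (hpmp : IsPmp G μ)
    (Γ : Subgroup G) (hΓ : Γ.FiniteIndex)
    (P : Quotient (QuotientGroup.rightRel Γ) → Set X)
    (hP : IsCtblPart P)
    (hPinv : ∀ c, ∀ γ : Γ, ((γ : G) • ·) ⁻¹' (P c) = P c)
    (hPorb : ∀ c, μ {x : X | ¬ ∃ g : G, g • x ∈ P c} = 0)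
    (hPmeas : ∀ c, μ (P c) = ((Γ.index : ℝ≥0∞))⁻¹)
    (hPsig₁ : LeModNull μ (invSigma Γ X) (partSigma P ⊔ invSigma G X))
    (hPsig₂ : LeModNull μ (partSigma P ⊔ invSigma G X) (invSigma Γ X))
    (τ : Measure (Measure X))
    (hτ : ∀ᵐ ν ∂τ, IsProbabilityMeasure ν ∧ IsPmp G ν ∧ ErgAction G ν)
    (hτdec : ∀ s : Set X, MeasurableSet s → μ s = ∫⁻ ν, ν s ∂τ) :
    ∀ᵐ ν ∂τ, HasNErgComponents Γ ν Γ.index := by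
  classical
  haveI : Finite (Quotient (QuotientGroup.rightRel Γ)) :=
    Finite.of_equiv _ (QuotientGroup.quotientRightRelEquivQuotientLeftRel Γ).symm
  haveI : Fintype (Quotient (QuotientGroup.rightRel Γ)) := Fintype.ofFinite _
  have hcard : Nat.card (Quotient (QuotientGroup.rightRel Γ)) = Γ.index := by
    rw [Subgroup.index_eq_card]
    exact Nat.card_congr (QuotientGroup.quotientRightRelEquivQuotientLeftRel Γ)
  have hidx0 : ((Γ.index : ℝ≥0∞)) ≠ 0 := Nat.cast_ne_zero.mpr hΓ.index_ne_zero
  have hidxtop : ((Γ.index : ℝ≥0∞)) ≠ ⊤ := ENNReal.natCast_ne_top _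
  -- saturations
  have hSatmeas : ∀ c, MeasurableSet (⋃ g : G, (fun x => g • x) ⁻¹' P c) :=
    fun c => MeasurableSet.iUnion (fun g => (hpmp g).measurable (hP.1 c))
  have hae1 : ∀ᵐ ν ∂τ, ∀ c, ν (⋃ g : G, (fun x => g • x) ⁻¹' P c)ᶜ = 0 := by
    rw [ae_all_iff]
    intro c
    have hmeas : MeasurableSet (⋃ g : G, (fun x => g • x) ⁻¹' P c)ᶜ := (hSatmeas c).compl
    have hcompl : {x : X | ¬ ∃ g : G, g • x ∈ P c} = (⋃ g : G, (fun x => g • x) ⁻¹' P c)ᶜ := by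
      ext x; simp [Set.mem_iUnion]
    have h0 : (∫⁻ ν, ν (⋃ g : G, (fun x => g • x) ⁻¹' P c)ᶜ ∂τ) = 0 := by
      rw [← hτdec _ hmeas, ← hcompl]; exact hPorb c
    have := (lintegral_eq_zero_iff (Measure.measurable_coe hmeas)).mp h0
    filter_upwards [this] with ν hν using hν
  filter_upwards [hτ, hae1] with ν hν hsat
  obtain ⟨hprob, hpmpν, hergν⟩ := hν
  haveI := hprob
  -- positivity of each piece
  have hpos : ∀ c, ν (P c) ≠ 0 := by
    intro c hzero
    have h1 : ν (⋃ g : G, (fun x => g • x) ⁻¹' P c) ≤ ∑' g : G, ν ((fun x => g • x) ⁻¹' P c) :=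
      measure_iUnion_le _
    have h2 : ∀ g : G, ν ((fun x => g • x) ⁻¹' P c) = 0 := fun g => by
      rw [(hpmpν g).measure_preimage (hP.1 c).nullMeasurableSet]; exact hzero
    simp only [h2, tsum_zero, nonpos_iff_eq_zero] at h1
    have hcontr : (1 : ℝ≥0∞) ≤ 0 := by
      calc (1:ℝ≥0∞) = ν ((⋃ g : G, (fun x => g • x) ⁻¹' P c) ∪ (⋃ g : G, (fun x => g • x) ⁻¹' P c)ᶜ) := by
            rw [Set.union_compl_self, measure_univ]
      _ ≤ ν (⋃ g : G, (fun x => g • x) ⁻¹' P c) + ν (⋃ g : G, (fun x => g • x) ⁻¹' P c)ᶜ :=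
            measure_union_le _ _
      _ = 0 := by rw [h1, hsat c, add_zero]
    simp at hcontr
  -- quantization of invariant sets
  have hquant : ∀ s : Set X, MeasurableSet s → (∀ γ : Γ, ((γ : G) • ·) ⁻¹' s = s) →
      ∃ j : ℕ, ((Γ.index : ℝ≥0∞)) * ν s = j := by
    intro s hs hsinv
    obtain ⟨j, hj⟩ := quant_aux6 Γ ν hpmpν hergν s hs hsinv
    rw [hcard] at hj
    exact ⟨j, hj⟩
  have hsum : ∑ c, ν (P c) = 1 := by
    have h := measure_iUnion (μ := ν) hP.2.1 hP.1
    rw [hP.2.2, measure_univ, tsum_fintype] at h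
    exact h.symm
  have hj : ∀ c, ∃ j : ℕ, ((Γ.index : ℝ≥0∞)) * ν (P c) = j :=
    fun c => hquant (P c) (hP.1 c) (hPinv c)
  choose jfun hjfun using hj
  have hjsum : ∑ c, jfun c = Γ.index := by
    have hcast : ((∑ c, jfun c : ℕ) : ℝ≥0∞) = ((Γ.index : ℕ) : ℝ≥0∞) := by
      rw [Nat.cast_sum]
      calc ∑ c, ((jfun c : ℕ) : ℝ≥0∞) = ∑ c, ((Γ.index : ℝ≥0∞)) * ν (P c) := by
            exact Finset.sum_congr rfl fun c _ => (hjfun c).symm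
      _ = ((Γ.index : ℝ≥0∞)) * ∑ c, ν (P c) := by rw [Finset.mul_sum]
      _ = ((Γ.index : ℕ) : ℝ≥0∞) := by rw [hsum, mul_one]
    exact_mod_cast hcast
  have hjpos : ∀ c, 1 ≤ jfun c := by
    intro c
    rcases Nat.eq_zero_or_pos (jfun c) with h | h
    · exfalso
      have := hjfun c
      rw [h, Nat.cast_zero] at this
      rcases mul_eq_zero.mp this with h' | h'
      · exact hidx0 h'
      · exact hpos c h'
    · exact h
  have hcardQ : Fintype.card (Quotient (QuotientGroup.rightRel Γ)) = Γ.index := by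
    rw [← Nat.card_eq_fintype_card, hcard]
  have hjone : ∀ c, jfun c = 1 := by
    intro c
    by_contra hne
    have h2 : 2 ≤ jfun c := by have := hjpos c; omega
    have hrest : (Finset.univ.erase c).card • 1 ≤ ∑ d ∈ Finset.univ.erase c, jfun d :=
      Finset.card_nsmul_le_sum _ _ _ (fun d _ => hjpos d)
    have hcarderase : (Finset.univ.erase c).card = Γ.index - 1 := by
      rw [Finset.card_erase_of_mem (Finset.mem_univ c), Finset.card_univ, hcardQ]
    have hsplit : jfun c + ∑ d ∈ Finset.univ.erase c, jfun d = Γ.index := by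
      rw [Finset.add_sum_erase _ _ (Finset.mem_univ c)]
      exact hjsum
    have hge1 : 1 ≤ Γ.index := Nat.one_le_iff_ne_zero.mpr hΓ.index_ne_zero
    rw [hcarderase, smul_eq_mul, mul_one] at hrest
    omega
  have hPc : ∀ c, ((Γ.index : ℝ≥0∞)) * ν (P c) = 1 := by
    intro c
    rw [hjfun c, hjone c, Nat.cast_one]
  -- the components
  set e : Fin Γ.index ≃ Quotient (QuotientGroup.rightRel Γ) :=
    (Fintype.equivFinOfCardEq hcardQ).symm with he
  refine ⟨fun i => P (e i), fun i => hP.1 _, ?_, ?_, ?_⟩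
  · intro i j hij
    exact hP.2.1 (e.injective.ne hij)
  · have huniv : ⋃ i, P (e i) = Set.univ := by
      rw [e.surjective.iUnion_comp P]
      exact hP.2.2
    rw [huniv, Set.compl_univ, measure_empty]
  · intro i
    refine ⟨fun γ => hPinv (e i) γ, ?_, ?_⟩
    · exact pos_iff_ne_zero.mpr (hpos (e i))
    · intro s hs hsinv
      have hsinv' : ∀ γ : Γ, ((γ : G) • ·) ⁻¹' (s ∩ P (e i)) = s ∩ P (e i) := by
        intro γ
        rw [Set.preimage_inter]
        have h1 : ((γ : G) • ·) ⁻¹' s = s := hsinv γ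
        rw [h1, hPinv (e i) γ]
      obtain ⟨j, hj⟩ := hquant (s ∩ P (e i)) (hs.inter (hP.1 _)) hsinv'
      have hle : ((Γ.index : ℝ≥0∞)) * ν (s ∩ P (e i)) ≤ 1 := by
        rw [← hPc (e i)]
        exact mul_le_mul_right (measure_mono Set.inter_subset_right) _
      rw [hj] at hle
      have hjle : j ≤ 1 := by exact_mod_cast hle
      interval_cases j
      · left
        rw [Measure.restrict_apply hs]
        rw [Nat.cast_zero] at hj
        rcases mul_eq_zero.mp hj with h' | h'
        · exact absurd h' hidx0
        · exact h'
      · right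
        rw [Measure.restrict_apply hs.compl]
        rw [Nat.cast_one] at hj
        have heq : ν (s ∩ P (e i)) = ν (P (e i)) :=
          (ENNReal.mul_right_inj hidx0 hidxtop).mp (by rw [hj, hPc (e i)])
        have hsplit : ν (P (e i) ∩ s) + ν (P (e i) \ s) = ν (P (e i)) :=
          measure_inter_add_diff _ hs
        rw [Set.inter_comm] at heq
        rw [heq] at hsplit
        have hdiff : ν (P (e i) \ s) = 0 := by
          have h' : ν (P (e i)) + ν (P (e i) \ s) = ν (P (e i)) + 0 := by
            rw [add_zero]; exact hsplit
          exact (ENNReal.add_right_inj (measure_ne_top ν _)).mp h'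
        rw [Set.inter_comm, ← Set.diff_eq]
        exact hdiff
end

section
/- Let G be a countable group, let G ↷ (Y, ν) and G ↷ (Z, η) be p.m.p. actions, and suppose G ↷ (Y, ν) weakly contains G ↷ (Z, η). Then for any p.m.p. action G ↷ (X, μ), the product joining G ↷ (X × Y, μ × ν) weakly contains G ↷ (X × Z, μ × η) as joinings with G ↷ (X, μ). -/
open MeasureTheory Set
open scoped ENNReal NNReal

theorem stmt9 {G X Y Z : Type*} [Group G] [Countable G]
    [MulAction G X] [MulAction G Y] [MulAction G Z]
    [mX : MeasurableSpace X] [mY : MeasurableSpace Y] [mZ : MeasurableSpace Z]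
    (μ : Measure X) (ν : Measure Y) (η : Measure Z)
    [IsProbabilityMeasure μ] [IsProbabilityMeasure ν] [IsProbabilityMeasure η]
    (hX : IsPmp G μ) (hY : IsPmp G ν) (hZ : IsPmp G η)
    (hwc : WeaklyContains G ν η) :
    WCJoin G (μ.prod ν) (μ.prod η) := by
  classical
  intro m k P hP γ hγ T ε hε
  obtain ⟨ζ, hζ, hsum⟩ := hwc k γ hγ T ε hε
  refine ⟨ζ, hζ, ?_⟩
  have hPsum : ∑ j : Fin m, (μ (P j)).toReal = 1 := by
    have h1 : ∑ j : Fin m, μ (P j) = 1 := by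
      calc ∑ j : Fin m, μ (P j) = ∑' j : Fin m, μ (P j) := (tsum_fintype _).symm
        _ = μ (⋃ j, P j) := (measure_iUnion hP.2.1 hP.1).symm
        _ = 1 := by rw [hP.2.2, measure_univ]
    rw [← ENNReal.toReal_sum (fun j _ => measure_ne_top μ _), h1, ENNReal.toReal_one]
  have key : ∀ (j : Fin m) (f : ↥T → Fin k),
      |(μ.prod ν (Prod.fst ⁻¹' P j ∩
          Prod.snd ⁻¹' ⋂ t : ↥T, ((t : G) • ·) ⁻¹' ζ (f t))).toReal -
       (μ.prod η (Prod.fst ⁻¹' P j ∩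
          Prod.snd ⁻¹' ⋂ t : ↥T, ((t : G) • ·) ⁻¹' γ (f t))).toReal|
      = (μ (P j)).toReal *
        |(ν (⋂ t : ↥T, ((t : G) • ·) ⁻¹' ζ (f t))).toReal -
         (η (⋂ t : ↥T, ((t : G) • ·) ⁻¹' γ (f t))).toReal| := by
    intro j f
    rw [← Set.prod_eq, ← Set.prod_eq, Measure.prod_prod, Measure.prod_prod,
      ENNReal.toReal_mul, ENNReal.toReal_mul, ← mul_sub, abs_mul,
      abs_of_nonneg ENNReal.toReal_nonneg]
  calc ∑ j : Fin m, ∑ f : (↥T → Fin k),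
        |(μ.prod ν (Prod.fst ⁻¹' P j ∩
            Prod.snd ⁻¹' ⋂ t : ↥T, ((t : G) • ·) ⁻¹' ζ (f t))).toReal -
         (μ.prod η (Prod.fst ⁻¹' P j ∩
            Prod.snd ⁻¹' ⋂ t : ↥T, ((t : G) • ·) ⁻¹' γ (f t))).toReal|
      = ∑ j : Fin m, (μ (P j)).toReal * ∑ f : (↥T → Fin k),
          |(ν (⋂ t : ↥T, ((t : G) • ·) ⁻¹' ζ (f t))).toReal -
           (η (⋂ t : ↥T, ((t : G) • ·) ⁻¹' γ (f t))).toReal| := by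
        refine Finset.sum_congr rfl fun j _ => ?_
        rw [Finset.mul_sum]
        exact Finset.sum_congr rfl fun f _ => key j f
    _ = (∑ j : Fin m, (μ (P j)).toReal) * ∑ f : (↥T → Fin k),
          |(ν (⋂ t : ↥T, ((t : G) • ·) ⁻¹' ζ (f t))).toReal -
           (η (⋂ t : ↥T, ((t : G) • ·) ⁻¹' γ (f t))).toReal| := by
        rw [Finset.sum_mul]
    _ = ∑ f : (↥T → Fin k),
          |(ν (⋂ t : ↥T, ((t : G) • ·) ⁻¹' ζ (f t))).toReal -
           (η (⋂ t : ↥T, ((t : G) • ·) ⁻¹' γ (f t))).toReal| := by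
        rw [hPsum, one_mul]
    _ < ε := hsum
end

section
/- Let G ↷ (X, μ), G ↷ (Z, η), and G ↷ (Y_i, ν_i) for i = 1, 2 be p.m.p. actions, with factor maps p : X → Z, q₁ : Y₁ → Z, q₂ : Y₂ → Z onto (Z, η). If G ↷ (Z × Y₁, (q₁ × id)_*(ν₁)) weakly contains G ↷ (Z × Y₂, (q₂ × id)_*(ν₂)) as joinings with G ↷ (Z, η), then G ↷ (X × Y₁, μ ⊗_η ν₁) weakly contains G ↷ (X × Y₂, μ ⊗_η ν₂) as joinings with G ↷ (X, μ). -/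
open MeasureTheory Set
open scoped ENNReal NNReal

section AuxLemmas

open scoped ENNReal
open ProbabilityTheory

private lemma aux_sum_part_one {Y ι : Type*} [MeasurableSpace Y] [Fintype ι] (ν : Measure Y)
    [IsProbabilityMeasure ν] {B : ι → Set Y} (hm : ∀ i, MeasurableSet (B i))
    (hd : Pairwise (Function.onFun Disjoint B)) (hc : ⋃ i, B i = univ) :
    ∑ i, (ν (B i)).toReal = 1 := by
  have h : ∑ i, ν (B i) = 1 := by
    rw [← tsum_fintype (L := .unconditional _), ← measure_iUnion hd hm, hc, measure_univ]
  rw [← ENNReal.toReal_sum (fun a _ => measure_ne_top ν _), h, ENNReal.toReal_one]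

private lemma aux_part_inter {G Y : Type*} [Group G] [MulAction G Y] [MeasurableSpace Y]
    {k : ℕ} {ζ : Fin k → Set Y} (hζ : IsCtblPart ζ)
    (hmeas : ∀ g : G, Measurable ((g • ·) : Y → Y)) (T : Finset G) :
    IsCtblPart (fun f : ↥T → Fin k => ⋂ t : ↥T, ((t : G) • ·) ⁻¹' ζ (f t)) := by
  obtain ⟨hζm, hζd, hζu⟩ := hζ
  refine ⟨fun f => MeasurableSet.iInter fun t => (hmeas _) (hζm _), ?_, ?_⟩
  · intro f f' hff
    obtain ⟨t, ht⟩ : ∃ t, f t ≠ f' t := by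
      by_contra h; push_neg at h; exact hff (funext h)
    exact Disjoint.mono (iInter_subset _ t) (iInter_subset _ t)
      (Disjoint.preimage _ (hζd ht))
  · ext y
    simp only [mem_iUnion, mem_iInter, mem_preimage, mem_univ, iff_true]
    have h : ∀ t : ↥T, ∃ n, (t : G) • y ∈ ζ n := fun t => by
      have := mem_univ ((t : G) • y)
      rw [← hζu] at this
      simpa [mem_iUnion] using this
    choose f hf using h
    exact ⟨f, hf⟩

private lemma aux_fiber {Y Z : Type*} [MeasurableSpace Y] [MeasurableSpace Z]
    {q : Y → Z} (hq : Measurable q) (ν : Measure Y) [IsProbabilityMeasure ν]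
    {z : Z} (hz : MeasurableSet ({z} : Set Z)) (h1 : ν (q ⁻¹' {z}) = 1)
    (C : Set Z) (B : Set Y) :
    ν (q ⁻¹' C ∩ B) = C.indicator (fun _ => ν B) z := by
  have hcompl : ν (q ⁻¹' {z})ᶜ = 0 := by
    have h2 := measure_compl (hq hz) (measure_ne_top ν _)
    rw [h1, measure_univ] at h2; simpa using h2
  by_cases hzC : z ∈ C
  · rw [indicator_of_mem hzC]
    rw [← measure_inter_conull hcompl, ← measure_inter_conull (s := B) hcompl]
    congr 1
    ext y
    simp only [mem_inter_iff, mem_preimage, mem_singleton_iff]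
    constructor
    · rintro ⟨⟨_, hB⟩, hzy⟩; exact ⟨hB, hzy⟩
    · rintro ⟨hB, hzy⟩; exact ⟨⟨by rw [hzy]; exact hzC, hB⟩, hzy⟩
  · rw [indicator_of_notMem hzC, ← measure_inter_conull hcompl]
    have he : q ⁻¹' C ∩ B ∩ q ⁻¹' {z} = ∅ := by
      ext y
      simp only [mem_inter_iff, mem_preimage, mem_singleton_iff, mem_empty_iff_false,
        iff_false, not_and]
      rintro ⟨hC, _⟩ hzy
      exact hzC (hzy ▸ hC)
    rw [he, measure_empty]

private lemma aux_floor_approx {N : ℕ} (hN : 0 < N) {x : ℝ} (h0 : 0 ≤ x) (h1 : x ≤ 1) :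
    |x - ((min (⌊(N : ℝ) * x⌋₊) (N - 1) : ℕ) : ℝ) / N| ≤ 1 / N := by
  have hN' : (0 : ℝ) < N := Nat.cast_pos.2 hN
  set t : ℕ := min (⌊(N : ℝ) * x⌋₊) (N - 1) with ht
  have hlow : (t : ℝ) ≤ N * x := by
    calc (t : ℝ) ≤ (⌊(N : ℝ) * x⌋₊ : ℝ) := by exact_mod_cast min_le_left _ _
    _ ≤ N * x := Nat.floor_le (by positivity)
  have hup : N * x ≤ (t : ℝ) + 1 := by
    rcases le_or_gt (⌊(N : ℝ) * x⌋₊) (N - 1) with h | h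
    · have : t = ⌊(N : ℝ) * x⌋₊ := min_eq_left h
      rw [this]
      exact le_of_lt (Nat.lt_floor_add_one _)
    · have ht2 : t = N - 1 := min_eq_right (le_of_lt h)
      have : ((N : ℕ) - 1 : ℕ) + 1 = N := Nat.succ_pred_eq_of_pos hN
      have hc : (t : ℝ) + 1 = N := by
        rw [ht2]; exact_mod_cast this
      rw [hc]
      nlinarith
  have heq : x - (t : ℝ) / N = ((N : ℝ) * x - t) / N := by field_simp
  rw [heq, abs_div, abs_of_pos hN']
  refine div_le_div_of_nonneg_right ?_ (le_of_lt hN')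
  rw [abs_le]
  constructor <;> linarith

private lemma aux_bind_rect {Z X Y : Type*} [MeasurableSpace Z] [MeasurableSpace X]
    [MeasurableSpace Y] (η : Measure Z) [IsProbabilityMeasure η]
    (μz : Z → Measure X) (νz : Z → Measure Y)
    (hμker : ∀ s : Set X, MeasurableSet s → Measurable fun z => μz z s)
    (hνker : ∀ s : Set Y, MeasurableSet s → Measurable fun z => νz z s)
    (hμprob : ∀ z, IsProbabilityMeasure (μz z))
    (hνprob : ∀ z, IsProbabilityMeasure (νz z))
    {A : Set X} (hA : MeasurableSet A) {B : Set Y} (hB : MeasurableSet B) :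
    ((η.bind fun z => (μz z).prod (νz z)) (Prod.fst ⁻¹' A ∩ Prod.snd ⁻¹' B)).toReal
      = ∫ z, (μz z A).toReal * (νz z B).toReal ∂η := by
  letI κX : Kernel Z X := ⟨μz, Measure.measurable_measure.2 hμker⟩
  haveI : IsMarkovKernel κX := ⟨hμprob⟩
  letI κY : Kernel Z Y := ⟨νz, Measure.measurable_measure.2 hνker⟩
  haveI : IsMarkovKernel κY := ⟨hνprob⟩
  have hker : Measurable fun z => (μz z).prod (νz z) := by
    have h := (κX ×ₖ κY).measurable
    have he : ⇑(κX ×ₖ κY) = fun z => (μz z).prod (νz z) := by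
      funext z; rw [Kernel.prod_apply]; rfl
    rwa [he] at h
  rw [← Set.prod_eq, Measure.bind_apply (hA.prod hB) hker.aemeasurable]
  have h1 : ∀ z, (μz z).prod (νz z) (A ×ˢ B) = μz z A * νz z B := fun z => by
    haveI := hνprob z
    exact Measure.prod_prod A B
  rw [lintegral_congr h1,
    ← integral_toReal (f := fun z => μz z A * νz z B) ((hμker A hA).mul (hνker B hB)).aemeasurable ?_]
  · exact integral_congr_ae (Filter.Eventually.of_forall fun z => ENNReal.toReal_mul)
  · refine Filter.Eventually.of_forall fun z => ?_
    haveI := hμprob z; haveI := hνprob z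
    exact ENNReal.mul_lt_top (measure_lt_top _ _) (measure_lt_top _ _)

private lemma aux_map_rect {Z Y : Type*} [MeasurableSpace Z] [MeasurableSpace Y]
    [MeasurableSingletonClass Z]
    (η : Measure Z) (ν : Measure Y) [IsProbabilityMeasure ν]
    {q : Y → Z} (hq : Measurable q)
    (νz : Z → Measure Y)
    (hνker : ∀ s : Set Y, MeasurableSet s → Measurable fun z => νz z s)
    (hνprob : ∀ z, IsProbabilityMeasure (νz z))
    (hνdis : ∀ s : Set Y, MeasurableSet s → ν s = ∫⁻ z, νz z s ∂η)
    (hfib : ∀ᵐ z ∂η, νz z (q ⁻¹' {z}) = 1)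
    {C : Set Z} (hC : MeasurableSet C) {B : Set Y} (hB : MeasurableSet B) :
    ((Measure.map (fun y => (q y, y)) ν) (Prod.fst ⁻¹' C ∩ Prod.snd ⁻¹' B)).toReal
      = ∫ z, C.indicator (fun z => (νz z B).toReal) z ∂η := by
  rw [← Set.prod_eq, Measure.map_apply
    (show Measurable fun y => (q y, y) from hq.prodMk measurable_id) (hC.prod hB)]
  have hpre : (fun y => (q y, y)) ⁻¹' (C ×ˢ B) = q ⁻¹' C ∩ B := by
    ext y; simp [Set.mem_prod]
  rw [hpre, hνdis _ ((hq hC).inter hB)]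
  have hcong : ∀ᵐ z ∂η, νz z (q ⁻¹' C ∩ B) = C.indicator (fun z => νz z B) z := by
    filter_upwards [hfib] with z hz
    haveI := hνprob z
    rw [aux_fiber hq (νz z) (measurableSet_singleton z) hz C B]
    by_cases h : z ∈ C <;> simp [h]
  rw [lintegral_congr_ae hcong,
    ← integral_toReal ((hνker B hB).indicator hC).aemeasurable ?_]
  · refine integral_congr_ae (Filter.Eventually.of_forall fun z => ?_)
    by_cases h : z ∈ C <;> simp [h]
  · refine Filter.Eventually.of_forall fun z => ?_
    haveI := hνprob z
    by_cases h : z ∈ C <;> simp [h]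

private lemma aux_core {Z : Type*} [MeasurableSpace Z] (η : Measure Z) [IsProbabilityMeasure η]
    {m : ℕ} {ιw ιf : Type*} [Fintype ιw] [Fintype ιf]
    (F : Fin m → Z → ℝ) (v : Z → ιw) (a : Fin m → ιw → ℝ)
    (G₁ G₂ : ιf → Z → ℝ) (δ : ℝ)
    (hFm : ∀ j, Measurable (F j)) (hF0 : ∀ j z, 0 ≤ F j z) (hF1 : ∀ j z, F j z ≤ 1)
    (hvm : ∀ w : ιw, MeasurableSet (v ⁻¹' {w}))
    (ha0 : ∀ j w, 0 ≤ a j w) (ha1 : ∀ j w, a j w ≤ 1)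
    (hFa : ∀ j z, |F j z - a j (v z)| ≤ δ)
    (hG₁m : ∀ f, Measurable (G₁ f)) (hG₁0 : ∀ f z, 0 ≤ G₁ f z) (hG₁1 : ∀ f z, G₁ f z ≤ 1)
    (hG₁sum : ∀ z, ∑ f, G₁ f z = 1)
    (hG₂m : ∀ f, Measurable (G₂ f)) (hG₂0 : ∀ f z, 0 ≤ G₂ f z) (hG₂1 : ∀ f z, G₂ f z ≤ 1)
    (hG₂sum : ∀ z, ∑ f, G₂ f z = 1) :
    ∑ j : Fin m, ∑ f : ιf, |∫ z, F j z * G₁ f z ∂η - ∫ z, F j z * G₂ f z ∂η|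
      ≤ 2 * m * δ + m * ∑ w : ιw, ∑ f : ιf,
          |∫ z, (v ⁻¹' {w}).indicator (G₁ f) z ∂η
            - ∫ z, (v ⁻¹' {w}).indicator (G₂ f) z ∂η| := by
  classical
  set A : Fin m → Z → ℝ := fun j z => a j (v z) with hA
  have hbdd : ∀ (h : Z → ℝ) (c : ℝ), Measurable h → (∀ z, |h z| ≤ c) → Integrable h η :=
    fun h c hm hb =>
    (integrable_const c).mono' hm.aestronglyMeasurable
      (Filter.Eventually.of_forall fun z => by simpa [Real.norm_eq_abs] using hb z)
  have hAm : ∀ j, Measurable (A j) := by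
    intro j
    have he : A j = fun z => ∑ w : ιw, (v ⁻¹' {w}).indicator (fun _ => a j w) z := by
      funext z
      rw [Finset.sum_eq_single (v z)]
      · rw [indicator_of_mem (by simp : z ∈ v ⁻¹' {v z})]
      · intro w _ hw
        exact indicator_of_notMem (by simp [Ne.symm hw]) _
      · intro h; exact absurd (Finset.mem_univ _) h
    rw [he]
    exact Finset.measurable_sum _ fun w _ => measurable_const.indicator (hvm w)
  have hAabs : ∀ j z, |A j z| ≤ 1 := fun j z =>
    abs_le.2 ⟨by linarith [ha0 j (v z)], ha1 j (v z)⟩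
  have hFAm : ∀ j, Measurable fun z => F j z - A j z := fun j => (hFm j).sub (hAm j)
  have hFAabs : ∀ j z, |F j z - A j z| ≤ δ := fun j z => hFa j z
  have hcollapse : ∀ (j : Fin m) (g : Z → ℝ) (z : Z),
      ∑ w : ιw, a j w * (v ⁻¹' {w}).indicator g z = A j z * g z := by
    intro j g z
    rw [Finset.sum_eq_single (v z)]
    · rw [indicator_of_mem (by simp : z ∈ v ⁻¹' {v z})]
    · intro w _ hw
      rw [indicator_of_notMem (by simp [Ne.symm hw]), mul_zero]
    · intro h; exact absurd (Finset.mem_univ _) h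
  have key : ∀ (j : Fin m) (G : ιf → Z → ℝ), (∀ f, Measurable (G f)) →
      (∀ f z, 0 ≤ G f z) → (∀ f z, G f z ≤ 1) → ∀ f,
      ∫ z, F j z * G f z ∂η
        = (∑ w : ιw, a j w * ∫ z, (v ⁻¹' {w}).indicator (G f) z ∂η)
          + ∫ z, (F j z - A j z) * G f z ∂η := by
    intro j G hGm hG0 hG1 f
    have hGb : ∀ z, |G f z| ≤ 1 := fun z => abs_le.2 ⟨by linarith [hG0 f z], hG1 f z⟩
    have hint1 : ∀ w : ιw, Integrable (fun z => a j w * (v ⁻¹' {w}).indicator (G f) z) η := by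
      intro w
      refine hbdd _ 1 (((hGm f).indicator (hvm w)).const_mul _) fun z => ?_
      rw [abs_mul]
      calc |a j w| * |(v ⁻¹' {w}).indicator (G f) z| ≤ 1 * 1 := by
            refine mul_le_mul ?_ ?_ (abs_nonneg _) zero_le_one
            · exact abs_le.2 ⟨by linarith [ha0 j w], ha1 j w⟩
            · rw [indicator]
              split_ifs with h
              · exact hGb z
              · simp
        _ = 1 := one_mul 1
    have hint2 : Integrable (fun z => (F j z - A j z) * G f z) η := by
      refine hbdd _ 2 ((hFAm j).mul (hGm f)) fun z => ?_
      rw [abs_mul]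
      have h1 : |F j z - A j z| ≤ 2 := by
        have := abs_sub (F j z) (A j z)
        have h2 : |F j z| ≤ 1 := by rw [abs_of_nonneg (hF0 j z)]; exact hF1 j z
        linarith [hAabs j z]
      calc |F j z - A j z| * |G f z| ≤ 2 * 1 :=
            mul_le_mul h1 (hGb z) (abs_nonneg _) (by norm_num)
        _ = 2 := by norm_num
    have e1 : (∑ w : ιw, a j w * ∫ z, (v ⁻¹' {w}).indicator (G f) z ∂η)
        = ∫ z, ∑ w : ιw, a j w * (v ⁻¹' {w}).indicator (G f) z ∂η := by
      rw [integral_finset_sum _ fun w _ => hint1 w]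
      exact Finset.sum_congr rfl fun w _ => (integral_const_mul _ _).symm
    rw [e1, ← integral_add (by
        have : (fun z => ∑ w : ιw, a j w * (v ⁻¹' {w}).indicator (G f) z)
            = fun z => A j z * G f z := funext fun z => hcollapse j (G f) z
        rw [this]
        refine hbdd _ 1 ((hAm j).mul (hGm f)) fun z => ?_
        rw [abs_mul]
        calc |A j z| * |G f z| ≤ 1 * 1 :=
              mul_le_mul (hAabs j z) (hGb z) (abs_nonneg _) zero_le_one
          _ = 1 := one_mul 1) hint2]
    refine integral_congr_ae (Filter.Eventually.of_forall fun z => ?_)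
    dsimp only
    rw [hcollapse j (G f) z]
    ring
  set D : ιw → ιf → ℝ := fun w f =>
    ∫ z, (v ⁻¹' {w}).indicator (G₁ f) z ∂η - ∫ z, (v ⁻¹' {w}).indicator (G₂ f) z ∂η with hD
  have habsint : ∀ (j : Fin m) (G : ιf → Z → ℝ), (∀ f z, 0 ≤ G f z) → ∀ f,
      |∫ z, (F j z - A j z) * G f z ∂η| ≤ ∫ z, |F j z - A j z| * G f z ∂η := by
    intro j G hG0 f
    calc |∫ z, (F j z - A j z) * G f z ∂η|
        = ‖∫ z, (F j z - A j z) * G f z ∂η‖ := (Real.norm_eq_abs _).symm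
      _ ≤ ∫ z, ‖(F j z - A j z) * G f z‖ ∂η := norm_integral_le_integral_norm _
      _ = ∫ z, |F j z - A j z| * G f z ∂η :=
          integral_congr_ae (Filter.Eventually.of_forall fun z => by
            dsimp only
            rw [Real.norm_eq_abs, abs_mul, abs_of_nonneg (hG0 f z)])
  have step : ∀ (j : Fin m) (f : ιf),
      |∫ z, F j z * G₁ f z ∂η - ∫ z, F j z * G₂ f z ∂η|
        ≤ (∫ z, |F j z - A j z| * G₁ f z ∂η) + (∑ w : ιw, |D w f|)
          + ∫ z, |F j z - A j z| * G₂ f z ∂η := by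
    intro j f
    rw [key j G₁ hG₁m hG₁0 hG₁1 f, key j G₂ hG₂m hG₂0 hG₂1 f]
    set P₁ := ∫ z, (F j z - A j z) * G₁ f z ∂η with hP₁
    set P₂ := ∫ z, (F j z - A j z) * G₂ f z ∂η with hP₂
    set I₁ : ιw → ℝ := fun w => ∫ z, (v ⁻¹' {w}).indicator (G₁ f) z ∂η with hI₁
    set I₂ : ιw → ℝ := fun w => ∫ z, (v ⁻¹' {w}).indicator (G₂ f) z ∂η with hI₂
    have hre : (∑ w : ιw, a j w * I₁ w + P₁) - (∑ w : ιw, a j w * I₂ w + P₂)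
        = (∑ w : ιw, a j w * D w f) + (P₁ - P₂) := by
      have h : ∑ w : ιw, a j w * D w f = ∑ w : ιw, (a j w * I₁ w - a j w * I₂ w) :=
        Finset.sum_congr rfl fun w _ => by rw [hD]; ring
      rw [h, Finset.sum_sub_distrib]; ring
    rw [hre]
    have hb1 := habsint j G₁ hG₁0 f
    have hb2 := habsint j G₂ hG₂0 f
    calc |(∑ w : ιw, a j w * D w f) + (P₁ - P₂)|
        ≤ |∑ w : ιw, a j w * D w f| + |P₁ - P₂| := abs_add_le _ _
      _ ≤ (∑ w : ιw, |a j w * D w f|) + (|P₁| + |P₂|) :=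
          add_le_add (Finset.abs_sum_le_sum_abs _ _) (abs_sub _ _)
      _ ≤ (∑ w : ιw, |D w f|) + (|P₁| + |P₂|) := by
          refine add_le_add (Finset.sum_le_sum fun w _ => ?_) le_rfl
          rw [abs_mul]
          calc |a j w| * |D w f| ≤ 1 * |D w f| :=
                mul_le_mul_of_nonneg_right
                  (abs_le.2 ⟨by linarith [ha0 j w], ha1 j w⟩) (abs_nonneg _)
            _ = |D w f| := one_mul _
      _ ≤ _ := by linarith
  have hsumG : ∀ (j : Fin m) (G : ιf → Z → ℝ), (∀ f, Measurable (G f)) →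
      (∀ f z, 0 ≤ G f z) → (∀ f z, G f z ≤ 1) → (∀ z, ∑ f : ιf, G f z = 1) →
      ∑ f : ιf, ∫ z, |F j z - A j z| * G f z ∂η ≤ δ := by
    intro j G hGm hG0 hG1 hGs
    have habs2 : ∀ z, |F j z - A j z| ≤ 2 := by
      intro z
      have h2 : |F j z| ≤ 1 := by rw [abs_of_nonneg (hF0 j z)]; exact hF1 j z
      have := abs_sub (F j z) (A j z)
      linarith [hAabs j z]
    have hint : ∀ f : ιf, Integrable (fun z => |F j z - A j z| * G f z) η := by
      intro f
      refine hbdd _ 2 ((hFAm j).abs.mul (hGm f)) fun z => ?_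
      rw [abs_mul, abs_abs]
      calc |F j z - A j z| * |G f z| ≤ 2 * 1 := by
            refine mul_le_mul (habs2 z) ?_ (abs_nonneg _) (by norm_num)
            exact abs_le.2 ⟨by linarith [hG0 f z], hG1 f z⟩
        _ = 2 := by norm_num
    rw [← integral_finset_sum _ fun f _ => hint f]
    have he : ∀ z, ∑ f : ιf, |F j z - A j z| * G f z = |F j z - A j z| := fun z => by
      rw [← Finset.mul_sum, hGs z, mul_one]
    calc ∫ z, ∑ f : ιf, |F j z - A j z| * G f z ∂η
        = ∫ z, |F j z - A j z| ∂η := integral_congr_ae (Filter.Eventually.of_forall he)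
      _ ≤ ∫ _, δ ∂η := integral_mono (hbdd _ 2 (hFAm j).abs fun z => by
            rw [abs_abs]; exact habs2 z) (integrable_const δ) fun z => hFAabs j z
      _ = δ := by simp
  calc ∑ j : Fin m, ∑ f : ιf, |∫ z, F j z * G₁ f z ∂η - ∫ z, F j z * G₂ f z ∂η|
      ≤ ∑ j : Fin m, ∑ f : ιf, ((∫ z, |F j z - A j z| * G₁ f z ∂η) + (∑ w : ιw, |D w f|)
          + ∫ z, |F j z - A j z| * G₂ f z ∂η) :=
        Finset.sum_le_sum fun j _ => Finset.sum_le_sum fun f _ => step j f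
    _ = ∑ j : Fin m, ((∑ f : ιf, ∫ z, |F j z - A j z| * G₁ f z ∂η)
          + (∑ f : ιf, ∑ w : ιw, |D w f|)
          + ∑ f : ιf, ∫ z, |F j z - A j z| * G₂ f z ∂η) := by
        refine Finset.sum_congr rfl fun j _ => ?_
        rw [← Finset.sum_add_distrib, ← Finset.sum_add_distrib]
    _ ≤ ∑ _j : Fin m, (δ + (∑ w : ιw, ∑ f : ιf, |D w f|) + δ) := by
        refine Finset.sum_le_sum fun j _ => ?_
        have h1 := hsumG j G₁ hG₁m hG₁0 hG₁1 hG₁sum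
        have h3 := hsumG j G₂ hG₂m hG₂0 hG₂1 hG₂sum
        have h2 : ∑ f : ιf, ∑ w : ιw, |D w f| = ∑ w : ιw, ∑ f : ιf, |D w f| :=
          Finset.sum_comm
        linarith
    _ = 2 * m * δ + m * ∑ w : ιw, ∑ f : ιf, |D w f| := by
        rw [Finset.sum_const, Finset.card_univ, Fintype.card_fin, nsmul_eq_mul]
        ring

end AuxLemmas

theorem stmt10 {G X Y₁ Y₂ Z : Type*} [Group G] [Countable G]
    [MulAction G X] [MulAction G Y₁] [MulAction G Y₂] [MulAction G Z]
    [mX : MeasurableSpace X] [StandardBorelSpace X]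
    [mY₁ : MeasurableSpace Y₁] [StandardBorelSpace Y₁]
    [mY₂ : MeasurableSpace Y₂] [StandardBorelSpace Y₂]
    [mZ : MeasurableSpace Z] [StandardBorelSpace Z]
    (μ : Measure X) (ν₁ : Measure Y₁) (ν₂ : Measure Y₂) (η : Measure Z)
    [IsProbabilityMeasure μ] [IsProbabilityMeasure ν₁] [IsProbabilityMeasure ν₂]
    [IsProbabilityMeasure η]
    (hX : IsPmp G μ) (hY₁ : IsPmp G ν₁) (hY₂ : IsPmp G ν₂) (hZ : IsPmp G η)
    (p : X → Z) (q₁ : Y₁ → Z) (q₂ : Y₂ → Z)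
    (hp : MeasurePreserving p μ η) (hq₁ : MeasurePreserving q₁ ν₁ η)
    (hq₂ : MeasurePreserving q₂ ν₂ η)
    (hpe : ∀ (g : G) (x : X), p (g • x) = g • p x)
    (hq₁e : ∀ (g : G) (y : Y₁), q₁ (g • y) = g • q₁ y)
    (hq₂e : ∀ (g : G) (y : Y₂), q₂ (g • y) = g • q₂ y)
    (μz : Z → Measure X) (ν₁z : Z → Measure Y₁) (ν₂z : Z → Measure Y₂)
    (hμker : ∀ s : Set X, MeasurableSet s → Measurable fun z => μz z s)
    (hν₁ker : ∀ s : Set Y₁, MeasurableSet s → Measurable fun z => ν₁z z s)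
    (hν₂ker : ∀ s : Set Y₂, MeasurableSet s → Measurable fun z => ν₂z z s)
    (hμprob : ∀ z, IsProbabilityMeasure (μz z))
    (hν₁prob : ∀ z, IsProbabilityMeasure (ν₁z z))
    (hν₂prob : ∀ z, IsProbabilityMeasure (ν₂z z))
    (hμdis : ∀ s : Set X, MeasurableSet s → μ s = ∫⁻ z, μz z s ∂η)
    (hν₁dis : ∀ s : Set Y₁, MeasurableSet s → ν₁ s = ∫⁻ z, ν₁z z s ∂η)
    (hν₂dis : ∀ s : Set Y₂, MeasurableSet s → ν₂ s = ∫⁻ z, ν₂z z s ∂η)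
    (hμfib : ∀ᵐ z ∂η, μz z (p ⁻¹' {z}) = 1)
    (hν₁fib : ∀ᵐ z ∂η, ν₁z z (q₁ ⁻¹' {z}) = 1)
    (hν₂fib : ∀ᵐ z ∂η, ν₂z z (q₂ ⁻¹' {z}) = 1)
    (hwc : WCJoin G (Measure.map (fun y => (q₁ y, y)) ν₁)
                    (Measure.map (fun y => (q₂ y, y)) ν₂)) :
    WCJoin G (η.bind fun z => (μz z).prod (ν₁z z))
             (η.bind fun z => (μz z).prod (ν₂z z)) := by
  letI : DecidableEq G := Classical.decEq G
  intro m k P hP γ hγ T ε hε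
  have hsY₁ : ∀ g : G, Measurable ((g • ·) : Y₁ → Y₁) := fun g => (hY₁ g).measurable
  have hsY₂ : ∀ g : G, Measurable ((g • ·) : Y₂ → Y₂) := fun g => (hY₂ g).measurable
  have hPm : ∀ j, MeasurableSet (P j) := hP.1
  set F : Fin m → Z → ℝ := fun j z => (μz z (P j)).toReal with hFdef
  have hFm : ∀ j, Measurable (F j) := fun j => (hμker _ (hPm j)).ennreal_toReal
  have hF0 : ∀ j z, 0 ≤ F j z := fun j z => ENNReal.toReal_nonneg
  have hF1 : ∀ j z, F j z ≤ 1 := by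
    intro j z
    haveI := hμprob z
    simpa using ENNReal.toReal_mono ENNReal.one_ne_top (prob_le_one (μ := μz z) (s := P j))
  set N : ℕ := ⌈4 * ((m : ℝ) + 1) / ε⌉₊ with hNdef
  have hN : 0 < N := Nat.ceil_pos.2 (by positivity)
  have hN' : (0 : ℝ) < N := Nat.cast_pos.2 hN
  have hNinv : (1 : ℝ) / N ≤ ε / (4 * ((m : ℝ) + 1)) := by
    rw [div_le_div_iff₀ hN' (by positivity)]
    have h1 : 4 * ((m : ℝ) + 1) / ε ≤ N := Nat.le_ceil _
    rw [div_le_iff₀ hε] at h1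
    linarith
  set v : Z → (Fin m → Fin N) := fun z j =>
    ⟨min (⌊(N : ℝ) * F j z⌋₊) (N - 1),
      lt_of_le_of_lt (min_le_right _ _) (Nat.sub_lt hN one_pos)⟩ with hvdef
  set a : Fin m → (Fin m → Fin N) → ℝ := fun j w => ((w j : ℕ) : ℝ) / N with hadef
  have ha0 : ∀ j w, 0 ≤ a j w := fun j w => by positivity
  have ha1 : ∀ j w, a j w ≤ 1 := by
    intro j w
    rw [hadef]
    dsimp only
    rw [div_le_one hN']
    exact_mod_cast le_of_lt (w j).is_lt
  have hFa : ∀ j z, |F j z - a j (v z)| ≤ 1 / N := fun j z =>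
    aux_floor_approx hN (hF0 j z) (hF1 j z)
  have hvm : ∀ w : Fin m → Fin N, MeasurableSet (v ⁻¹' {w}) := by
    intro w
    have heq : v ⁻¹' {w}
        = ⋂ j, (fun z => min (⌊(N : ℝ) * F j z⌋₊) (N - 1)) ⁻¹' {(w j : ℕ)} := by
      ext z
      simp only [Set.mem_preimage, Set.mem_singleton_iff, Set.mem_iInter, funext_iff]
      constructor
      · intro h j
        exact congrArg Fin.val (h j)
      · intro h j
        exact Fin.ext (h j)
    rw [heq]
    refine MeasurableSet.iInter fun j => ?_
    exact ((measurable_from_top (f := fun n : ℕ => min n (N - 1))).comp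
      (Nat.measurable_floor.comp (measurable_const.mul (hFm j)))) (measurableSet_singleton _)
  set k' : ℕ := Fintype.card (Fin m → Fin N) with hk'def
  set e : Fin k' ≃ (Fin m → Fin N) := (Fintype.equivFin (Fin m → Fin N)).symm with hedef
  have hCpart : IsCtblPart (fun r : Fin k' => v ⁻¹' {e r}) := by
    refine ⟨fun r => hvm _, ?_, ?_⟩
    · intro r r' hrr
      refine Set.disjoint_left.2 fun z hz hz' => ?_
      simp only [Set.mem_preimage, Set.mem_singleton_iff] at hz hz'
      exact e.injective.ne hrr (hz.symm.trans hz')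
    · ext z
      simp only [Set.mem_iUnion, Set.mem_preimage, Set.mem_singleton_iff, Set.mem_univ,
        iff_true]
      exact ⟨e.symm (v z), by simp⟩
  obtain ⟨ζ, hζ, hS⟩ := hwc k' k (fun r => v ⁻¹' {e r}) hCpart γ hγ T
    (ε / (2 * ((m : ℝ) + 1))) (by positivity)
  refine ⟨ζ, hζ, ?_⟩
  have hB₁ := aux_part_inter hζ hsY₁ T
  have hB₂ := aux_part_inter hγ hsY₂ T
  set G₁ : (↥T → Fin k) → Z → ℝ :=
    fun f z => (ν₁z z (⋂ t : ↥T, ((t : G) • ·) ⁻¹' ζ (f t))).toReal with hG₁def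
  set G₂ : (↥T → Fin k) → Z → ℝ :=
    fun f z => (ν₂z z (⋂ t : ↥T, ((t : G) • ·) ⁻¹' γ (f t))).toReal with hG₂def
  have hG₁m : ∀ f, Measurable (G₁ f) := fun f => (hν₁ker _ (hB₁.1 f)).ennreal_toReal
  have hG₂m : ∀ f, Measurable (G₂ f) := fun f => (hν₂ker _ (hB₂.1 f)).ennreal_toReal
  have hG₁0 : ∀ f z, 0 ≤ G₁ f z := fun f z => ENNReal.toReal_nonneg
  have hG₂0 : ∀ f z, 0 ≤ G₂ f z := fun f z => ENNReal.toReal_nonneg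
  have hG₁1 : ∀ f z, G₁ f z ≤ 1 := by
    intro f z
    haveI := hν₁prob z
    simpa using ENNReal.toReal_mono ENNReal.one_ne_top (prob_le_one (μ := ν₁z z))
  have hG₂1 : ∀ f z, G₂ f z ≤ 1 := by
    intro f z
    haveI := hν₂prob z
    simpa using ENNReal.toReal_mono ENNReal.one_ne_top (prob_le_one (μ := ν₂z z))
  have hG₁sum : ∀ z, ∑ f : ↥T → Fin k, G₁ f z = 1 := fun z => by
    haveI := hν₁prob z
    exact aux_sum_part_one (ν₁z z) hB₁.1 hB₁.2.1 hB₁.2.2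
  have hG₂sum : ∀ z, ∑ f : ↥T → Fin k, G₂ f z = 1 := fun z => by
    haveI := hν₂prob z
    exact aux_sum_part_one (ν₂z z) hB₂.1 hB₂.2.1 hB₂.2.2
  have hrw₁ : ∀ (j : Fin m) (f : ↥T → Fin k),
      ((η.bind fun z => (μz z).prod (ν₁z z))
        (Prod.fst ⁻¹' P j ∩ Prod.snd ⁻¹' ⋂ t : ↥T, ((t : G) • ·) ⁻¹' ζ (f t))).toReal
        = ∫ z, F j z * G₁ f z ∂η := fun j f =>
    aux_bind_rect η μz ν₁z hμker hν₁ker hμprob hν₁prob (hPm j) (hB₁.1 f)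
  have hrw₂ : ∀ (j : Fin m) (f : ↥T → Fin k),
      ((η.bind fun z => (μz z).prod (ν₂z z))
        (Prod.fst ⁻¹' P j ∩ Prod.snd ⁻¹' ⋂ t : ↥T, ((t : G) • ·) ⁻¹' γ (f t))).toReal
        = ∫ z, F j z * G₂ f z ∂η := fun j f =>
    aux_bind_rect η μz ν₂z hμker hν₂ker hμprob hν₂prob (hPm j) (hB₂.1 f)
  have hΛ₁ : ∀ (r : Fin k') (f : ↥T → Fin k),
      ((Measure.map (fun y => (q₁ y, y)) ν₁)
        (Prod.fst ⁻¹' (v ⁻¹' {e r})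
          ∩ Prod.snd ⁻¹' ⋂ t : ↥T, ((t : G) • ·) ⁻¹' ζ (f t))).toReal
        = ∫ z, (v ⁻¹' {e r}).indicator (G₁ f) z ∂η := fun r f =>
    aux_map_rect η ν₁ hq₁.measurable ν₁z hν₁ker hν₁prob hν₁dis hν₁fib (hvm _) (hB₁.1 f)
  have hΛ₂ : ∀ (r : Fin k') (f : ↥T → Fin k),
      ((Measure.map (fun y => (q₂ y, y)) ν₂)
        (Prod.fst ⁻¹' (v ⁻¹' {e r})
          ∩ Prod.snd ⁻¹' ⋂ t : ↥T, ((t : G) • ·) ⁻¹' γ (f t))).toReal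
        = ∫ z, (v ⁻¹' {e r}).indicator (G₂ f) z ∂η := fun r f =>
    aux_map_rect η ν₂ hq₂.measurable ν₂z hν₂ker hν₂prob hν₂dis hν₂fib (hvm _) (hB₂.1 f)
  have hSre : ∑ w : Fin m → Fin N, ∑ f : ↥T → Fin k,
      |∫ z, (v ⁻¹' {w}).indicator (G₁ f) z ∂η - ∫ z, (v ⁻¹' {w}).indicator (G₂ f) z ∂η|
      < ε / (2 * ((m : ℝ) + 1)) := by
    calc ∑ w : Fin m → Fin N, ∑ f : ↥T → Fin k,
        |∫ z, (v ⁻¹' {w}).indicator (G₁ f) z ∂η - ∫ z, (v ⁻¹' {w}).indicator (G₂ f) z ∂η|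
        = ∑ r : Fin k', ∑ f : ↥T → Fin k,
          |∫ z, (v ⁻¹' {e r}).indicator (G₁ f) z ∂η
            - ∫ z, (v ⁻¹' {e r}).indicator (G₂ f) z ∂η| :=
          (Equiv.sum_comp e fun w => ∑ f : ↥T → Fin k,
            |∫ z, (v ⁻¹' {w}).indicator (G₁ f) z ∂η
              - ∫ z, (v ⁻¹' {w}).indicator (G₂ f) z ∂η|).symm
      _ = ∑ r : Fin k', ∑ f : ↥T → Fin k,
          |((Measure.map (fun y => (q₁ y, y)) ν₁)
              (Prod.fst ⁻¹' (v ⁻¹' {e r})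
                ∩ Prod.snd ⁻¹' ⋂ t : ↥T, ((t : G) • ·) ⁻¹' ζ (f t))).toReal
            - ((Measure.map (fun y => (q₂ y, y)) ν₂)
              (Prod.fst ⁻¹' (v ⁻¹' {e r})
                ∩ Prod.snd ⁻¹' ⋂ t : ↥T, ((t : G) • ·) ⁻¹' γ (f t))).toReal| :=
          Finset.sum_congr rfl fun r _ => Finset.sum_congr rfl fun f _ => by
            rw [hΛ₁ r f, hΛ₂ r f]
      _ < ε / (2 * ((m : ℝ) + 1)) := hS
  have hcore := aux_core η F v a G₁ G₂ (1 / (N : ℝ)) hFm hF0 hF1 hvm ha0 ha1 hFa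
      hG₁m hG₁0 hG₁1 hG₁sum hG₂m hG₂0 hG₂1 hG₂sum
  refine lt_of_le_of_lt (le_trans (le_of_eq (Finset.sum_congr rfl fun j _ =>
    Finset.sum_congr rfl fun f _ => by rw [hrw₁ j f, hrw₂ j f])) hcore) ?_
  have hm0 : (0 : ℝ) ≤ m := Nat.cast_nonneg m
  have hmp : (0 : ℝ) < (m : ℝ) + 1 := by positivity
  set S := ∑ w : Fin m → Fin N, ∑ f : ↥T → Fin k,
      |∫ z, (v ⁻¹' {w}).indicator (G₁ f) z ∂η
        - ∫ z, (v ⁻¹' {w}).indicator (G₂ f) z ∂η| with hSdef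
  have hSnn : 0 ≤ S := Finset.sum_nonneg fun w _ => Finset.sum_nonneg fun f _ => abs_nonneg _
  have h2 : 2 * (m : ℝ) * (1 / (N : ℝ)) ≤ 2 * m * (ε / (4 * ((m : ℝ) + 1))) :=
    mul_le_mul_of_nonneg_left hNinv (by positivity)
  have h3 : (m : ℝ) * S ≤ m * (ε / (2 * ((m : ℝ) + 1))) :=
    mul_le_mul_of_nonneg_left (le_of_lt hSre) hm0
  have h4 : 2 * (m : ℝ) * (ε / (4 * ((m : ℝ) + 1))) + m * (ε / (2 * ((m : ℝ) + 1)))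
      = ε * m / ((m : ℝ) + 1) := by
    field_simp
    ring
  have h5 : ε * m / ((m : ℝ) + 1) < ε := by
    rw [div_lt_iff₀ hmp]
    nlinarith
  linarith
end
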